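/- Let constants σ, q, k, γ, β > 0 and λ ∈ [0,1] be given, let T > 0, and let (ξ(t), w(t), h[t], v[t], ζ(t), z(t)) for t ∈ [0,T] be a classical smooth solution (all partial derivatives ∂_t^j ∂_x^i h and ∂_t^j ∂_x^i v with j ≤ 2, i ≤ 4 exist and are continuous on [0,T]×[0,1], and h > 0) of the viscous Saint-Venant liquid-tank system with L = g = h* = m = 1 under the reduced-order observer, the filter, and the feedback f = −σ(2λz + (1−2λ)μ(h(t,1) − h(t,0)) − q(ζ + (γ+k)ξ)). Then there exists a constant M̄ > 0 such that for all sufficiently small δt ∈ (0,T) and δx = 1/n (n ≥ 2 an integer), the one-step values h_i⁺, v_i⁺ (i = 0,…,n), ξ⁺, w⁺, ζ⁺, z⁺ of the finite-difference scheme initialized at the exact solution values at time 0 satisfy |ξ⁺ − ξ(δt)| + |w⁺ − w(δt)| + |z⁺ − z(δt)| + |ζ⁺ − ζ(δt)| + max_{i=0,…,n}(|h_i⁺ − h(δt, iδx)| + |v_i⁺ − v(δt, iδx)|) ≤ M̄ δt (δt + δx²). -/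

import Mathlib

set_option maxHeartbeats 3000000

open Set

lemma abs_sub_le_of_uIcc {t₀ y u : ℝ} (hu : u ∈ uIcc t₀ y) : |u - t₀| ≤ |y - t₀| := by
  rcases le_total t₀ y with h | h
  · rw [uIcc_of_le h] at hu
    rw [abs_of_nonneg (by linarith [hu.1]), abs_of_nonneg (by linarith)]
    linarith [hu.2]
  · rw [uIcc_of_ge h] at hu
    rw [abs_of_nonpos (by linarith [hu.2]), abs_of_nonpos (by linarith)]
    linarith [hu.1]

lemma lip_of_bound {g g1 : ℝ → ℝ} {s : Set ℝ} (hconv : Convex ℝ s)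
    (hder : ∀ t ∈ s, HasDerivWithinAt g (g1 t) s t) {K : ℝ}
    (hbd : ∀ t ∈ s, |g1 t| ≤ K) :
    ∀ u ∈ s, ∀ t₀ ∈ s, |g u - g t₀| ≤ K * |u - t₀| := by
  intro u hu t₀ ht₀
  have := hconv.norm_image_sub_le_of_norm_hasDerivWithin_le (f' := g1) hder
    (by simpa [Real.norm_eq_abs] using hbd) ht₀ hu
  simpa [Real.norm_eq_abs] using this

lemma taylor1 {g g1 : ℝ → ℝ} {s : Set ℝ} (hconv : Convex ℝ s)
    (hder : ∀ t ∈ s, HasDerivWithinAt g (g1 t) s t)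
    {K t₀ : ℝ} (ht₀ : t₀ ∈ s) (hK : 0 ≤ K)
    (hlip : ∀ u ∈ s, |g1 u - g1 t₀| ≤ K * |u - t₀|)
    {y : ℝ} (hy : y ∈ s) :
    |g y - g t₀ - (y - t₀) * g1 t₀| ≤ K * |y - t₀| ^ 2 := by
  have hsub : uIcc t₀ y ⊆ s := hconv.ordConnected.uIcc_subset ht₀ hy
  set f : ℝ → ℝ := fun u => g u - u * g1 t₀ with hf
  have hderf : ∀ u ∈ uIcc t₀ y, HasDerivWithinAt f (g1 u - g1 t₀) (uIcc t₀ y) u := by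
    intro u hu
    have h2 : HasDerivWithinAt (fun u : ℝ => u * g1 t₀) (g1 t₀) (uIcc t₀ y) u := by
      simpa using (hasDerivWithinAt_id u (uIcc t₀ y)).mul_const (g1 t₀)
    exact ((hder u (hsub hu)).mono hsub).sub h2
  have hbd : ∀ u ∈ uIcc t₀ y, ‖g1 u - g1 t₀‖ ≤ K * |y - t₀| := by
    intro u hu
    calc ‖g1 u - g1 t₀‖ ≤ K * |u - t₀| := by
          simpa [Real.norm_eq_abs] using hlip u (hsub hu)
      _ ≤ K * |y - t₀| := by
          exact mul_le_mul_of_nonneg_left (abs_sub_le_of_uIcc hu) hK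
  have := (convex_uIcc t₀ y).norm_image_sub_le_of_norm_hasDerivWithin_le hderf hbd
    left_mem_uIcc right_mem_uIcc
  have heq : f y - f t₀ = g y - g t₀ - (y - t₀) * g1 t₀ := by simp [hf]; ring
  rw [heq, Real.norm_eq_abs, Real.norm_eq_abs] at this
  calc |g y - g t₀ - (y - t₀) * g1 t₀| ≤ K * |y - t₀| * |y - t₀| := this
    _ = K * |y - t₀| ^ 2 := by ring

lemma taylor2 {g g1 g2 : ℝ → ℝ} {s : Set ℝ} (hconv : Convex ℝ s)
    (hder : ∀ t ∈ s, HasDerivWithinAt g (g1 t) s t)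
    (hder1 : ∀ t ∈ s, HasDerivWithinAt g1 (g2 t) s t)
    {K t₀ : ℝ} (ht₀ : t₀ ∈ s) (hK : 0 ≤ K)
    (hlip : ∀ u ∈ s, |g2 u - g2 t₀| ≤ K * |u - t₀|)
    {y : ℝ} (hy : y ∈ s) :
    |g y - g t₀ - (y - t₀) * g1 t₀ - (y - t₀) ^ 2 / 2 * g2 t₀| ≤ K * |y - t₀| ^ 3 := by
  have hsub : uIcc t₀ y ⊆ s := hconv.ordConnected.uIcc_subset ht₀ hy
  set f : ℝ → ℝ := fun u => g u - u * g1 t₀ - (u - t₀) ^ 2 * (g2 t₀ / 2) with hf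
  have hderf : ∀ u ∈ uIcc t₀ y,
      HasDerivWithinAt f (g1 u - g1 t₀ - (u - t₀) * g2 t₀) (uIcc t₀ y) u := by
    intro u hu
    have h2 : HasDerivWithinAt (fun u : ℝ => u * g1 t₀) (g1 t₀) (uIcc t₀ y) u := by
      simpa using (hasDerivWithinAt_id u (uIcc t₀ y)).mul_const (g1 t₀)
    have h3 : HasDerivWithinAt (fun u : ℝ => (u - t₀) ^ 2 * (g2 t₀ / 2))
        ((u - t₀) * g2 t₀) (uIcc t₀ y) u := by
      have := (((hasDerivWithinAt_id u (uIcc t₀ y)).sub_const t₀).pow 2).mul_const (g2 t₀ / 2)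
      convert this using 1
      · rfl
      · rfl
      · rfl
      simp only [id_eq]
      ring
    exact (((hder u (hsub hu)).mono hsub).sub h2).sub h3
  have hbd : ∀ u ∈ uIcc t₀ y, ‖g1 u - g1 t₀ - (u - t₀) * g2 t₀‖ ≤ K * |y - t₀| ^ 2 := by
    intro u hu
    calc ‖g1 u - g1 t₀ - (u - t₀) * g2 t₀‖ ≤ K * |u - t₀| ^ 2 := by
          simpa [Real.norm_eq_abs] using taylor1 hconv hder1 ht₀ hK hlip (hsub hu)
      _ ≤ K * |y - t₀| ^ 2 := by
          exact mul_le_mul_of_nonneg_left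
            (pow_le_pow_left₀ (abs_nonneg _) (abs_sub_le_of_uIcc hu) _) hK
  have := (convex_uIcc t₀ y).norm_image_sub_le_of_norm_hasDerivWithin_le hderf hbd
    left_mem_uIcc right_mem_uIcc
  have heq : f y - f t₀ = g y - g t₀ - (y - t₀) * g1 t₀ - (y - t₀) ^ 2 / 2 * g2 t₀ := by
    simp [hf]; ring
  rw [heq, Real.norm_eq_abs, Real.norm_eq_abs] at this
  calc |g y - g t₀ - (y - t₀) * g1 t₀ - (y - t₀) ^ 2 / 2 * g2 t₀|
      ≤ K * |y - t₀| ^ 2 * |y - t₀| := this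
    _ = K * |y - t₀| ^ 3 := by ring

lemma taylor3 {g g1 g2 g3 : ℝ → ℝ} {s : Set ℝ} (hconv : Convex ℝ s)
    (hder : ∀ t ∈ s, HasDerivWithinAt g (g1 t) s t)
    (hder1 : ∀ t ∈ s, HasDerivWithinAt g1 (g2 t) s t)
    (hder2 : ∀ t ∈ s, HasDerivWithinAt g2 (g3 t) s t)
    {K t₀ : ℝ} (ht₀ : t₀ ∈ s) (hK : 0 ≤ K)
    (hlip : ∀ u ∈ s, |g3 u - g3 t₀| ≤ K * |u - t₀|)
    {y : ℝ} (hy : y ∈ s) :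
    |g y - g t₀ - (y - t₀) * g1 t₀ - (y - t₀) ^ 2 / 2 * g2 t₀ - (y - t₀) ^ 3 / 6 * g3 t₀|
      ≤ K * |y - t₀| ^ 4 := by
  have hsub : uIcc t₀ y ⊆ s := hconv.ordConnected.uIcc_subset ht₀ hy
  set f : ℝ → ℝ := fun u =>
    g u - u * g1 t₀ - (u - t₀) ^ 2 * (g2 t₀ / 2) - (u - t₀) ^ 3 * (g3 t₀ / 6) with hf
  have hderf : ∀ u ∈ uIcc t₀ y,
      HasDerivWithinAt f
        (g1 u - g1 t₀ - (u - t₀) * g2 t₀ - (u - t₀) ^ 2 / 2 * g3 t₀) (uIcc t₀ y) u := by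
    intro u hu
    have h2 : HasDerivWithinAt (fun u : ℝ => u * g1 t₀) (g1 t₀) (uIcc t₀ y) u := by
      simpa using (hasDerivWithinAt_id u (uIcc t₀ y)).mul_const (g1 t₀)
    have h3 : HasDerivWithinAt (fun u : ℝ => (u - t₀) ^ 2 * (g2 t₀ / 2))
        ((u - t₀) * g2 t₀) (uIcc t₀ y) u := by
      have := (((hasDerivWithinAt_id u (uIcc t₀ y)).sub_const t₀).pow 2).mul_const (g2 t₀ / 2)
      convert this using 1
      · rfl
      · rfl
      · rfl
      simp only [id_eq]
      ring
    have h4 : HasDerivWithinAt (fun u : ℝ => (u - t₀) ^ 3 * (g3 t₀ / 6))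
        ((u - t₀) ^ 2 / 2 * g3 t₀) (uIcc t₀ y) u := by
      have := (((hasDerivWithinAt_id u (uIcc t₀ y)).sub_const t₀).pow 3).mul_const (g3 t₀ / 6)
      convert this using 1
      · rfl
      · rfl
      · rfl
      simp only [id_eq]
      ring
    exact ((((hder u (hsub hu)).mono hsub).sub h2).sub h3).sub h4
  have hbd : ∀ u ∈ uIcc t₀ y,
      ‖g1 u - g1 t₀ - (u - t₀) * g2 t₀ - (u - t₀) ^ 2 / 2 * g3 t₀‖ ≤ K * |y - t₀| ^ 3 := by
    intro u hu
    calc ‖g1 u - g1 t₀ - (u - t₀) * g2 t₀ - (u - t₀) ^ 2 / 2 * g3 t₀‖ ≤ K * |u - t₀| ^ 3 := by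
          simpa [Real.norm_eq_abs] using taylor2 hconv hder1 hder2 ht₀ hK hlip (hsub hu)
      _ ≤ K * |y - t₀| ^ 3 := by
          exact mul_le_mul_of_nonneg_left
            (pow_le_pow_left₀ (abs_nonneg _) (abs_sub_le_of_uIcc hu) _) hK
  have := (convex_uIcc t₀ y).norm_image_sub_le_of_norm_hasDerivWithin_le hderf hbd
    left_mem_uIcc right_mem_uIcc
  have heq : f y - f t₀ =
      g y - g t₀ - (y - t₀) * g1 t₀ - (y - t₀) ^ 2 / 2 * g2 t₀ - (y - t₀) ^ 3 / 6 * g3 t₀ := by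
    simp [hf]; ring
  rw [heq, Real.norm_eq_abs, Real.norm_eq_abs] at this
  calc |g y - g t₀ - (y - t₀) * g1 t₀ - (y - t₀) ^ 2 / 2 * g2 t₀ - (y - t₀) ^ 3 / 6 * g3 t₀|
      ≤ K * |y - t₀| ^ 3 * |y - t₀| := this
    _ = K * |y - t₀| ^ 4 := by ring


open Set

/-- The explicit finite-difference update (6.1) of the liquid level. -/
noncomputable def hPlus (δt δx : ℝ) (n : ℕ) (hh vv : ℕ → ℝ) (i : ℕ) : ℝ :=
  if i = 0 then hh 0 * Real.exp (δt / (2 * δx) * (vv 2 - 4 * vv 1))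
  else if i = n then hh n * Real.exp (δt / (2 * δx) * (4 * vv (n - 1) - vv (n - 2)))
  else hh i * Real.exp (δt / (2 * δx) * (vv (i - 1) - vv (i + 1))
        + δt / (2 * δx) * vv i * Real.log (hh (i - 1) / hh (i + 1)))

/-- The explicit finite-difference update (6.2)-(6.3) of the liquid velocity,
with `fd` the applied discrete input. -/
noncomputable def vPlus (δt δx μ fd : ℝ) (n : ℕ) (hh vv : ℕ → ℝ) (i : ℕ) : ℝ :=
  if i = 0 ∨ i = n then 0
  else (1 - 2 * δt * μ / δx ^ 2) * vv i + δt * μ / δx ^ 2 * (vv (i + 1) + vv (i - 1))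
    + δt * μ / (4 * δx ^ 2) * (vv (i + 1) - vv (i - 1)) * Real.log (hh (i + 1) / hh (i - 1))
    - δt / (2 * δx) * (vv i * (vv (i + 1) - vv (i - 1)) + hh (i + 1) - hh (i - 1))
    + fd * δt

/-- Theorem 4 of the paper: one-step consistency, of order
`O(δt(δt + δx²))`, of the numerical discretization (6.1)-(6.3), (6.6)-(6.8) of
the viscous Saint-Venant system with `L = g = h* = m = 1` in closed loop with
the output feedback (6.6) based on the reduced-order observer.

The families `Dh j i` and `Dv j i` are the mixed partial derivatives
`∂ₓ^i ∂ₜ^j h` and `∂ₓ^i ∂ₜ^j v` (one-sided at the boundary of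
`[0,T] × [0,1]`): all of them with `j ≤ 2`, `i ≤ 4` exist and are continuous
on `[0,T] × [0,1]` ("classical smooth solution"). -/
theorem reduced_order_scheme_consistency
    (σ q k γ β lam μ T : ℝ)
    (hσ : 0 < σ) (hq : 0 < q) (hk : 0 < k) (hγ : 0 < γ) (hβ : 0 < β) (hμ : 0 < μ)
    (hlam : lam ∈ Icc (0:ℝ) 1) (hT : 0 < T)
    (ξ w ζ z f : ℝ → ℝ)
    (h v : ℝ → ℝ → ℝ)
    (Dh Dv : ℕ → ℕ → ℝ → ℝ → ℝ)
    (hDh0 : Dh 0 0 = h) (hDv0 : Dv 0 0 = v)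
    (h_pos : ∀ t ∈ Icc 0 T, ∀ x ∈ Icc (0:ℝ) 1, 0 < h t x)
    -- existence of all time partial derivatives up to order 2
    (hDh_t : ∀ j < 2, ∀ i ≤ 4, ∀ t ∈ Icc 0 T, ∀ x ∈ Icc (0:ℝ) 1,
      HasDerivWithinAt (fun s => Dh j i s x) (Dh (j + 1) i t x) (Icc 0 T) t)
    (hDv_t : ∀ j < 2, ∀ i ≤ 4, ∀ t ∈ Icc 0 T, ∀ x ∈ Icc (0:ℝ) 1,
      HasDerivWithinAt (fun s => Dv j i s x) (Dv (j + 1) i t x) (Icc 0 T) t)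
    -- existence of all spatial partial derivatives up to order 4
    (hDh_x : ∀ j ≤ 2, ∀ i < 4, ∀ t ∈ Icc 0 T, ∀ x ∈ Icc (0:ℝ) 1,
      HasDerivWithinAt (fun y => Dh j i t y) (Dh j (i + 1) t x) (Icc 0 1) x)
    (hDv_x : ∀ j ≤ 2, ∀ i < 4, ∀ t ∈ Icc 0 T, ∀ x ∈ Icc (0:ℝ) 1,
      HasDerivWithinAt (fun y => Dv j i t y) (Dv j (i + 1) t x) (Icc 0 1) x)
    -- continuity of all these partial derivatives
    (hDh_c : ∀ j ≤ 2, ∀ i ≤ 4,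
      ContinuousOn (fun p : ℝ × ℝ => Dh j i p.1 p.2) (Icc 0 T ×ˢ Icc (0:ℝ) 1))
    (hDv_c : ∀ j ≤ 2, ∀ i ≤ 4,
      ContinuousOn (fun p : ℝ × ℝ => Dv j i p.1 p.2) (Icc 0 T ×ˢ Icc (0:ℝ) 1))
    -- the continuity equation h_t + (h v)_x = 0
    (pde_mass : ∀ t ∈ Icc 0 T, ∀ x ∈ Icc (0:ℝ) 1,
      Dh 1 0 t x + (Dh 0 1 t x * v t x + h t x * Dv 0 1 t x) = 0)
    -- the momentum equation (hv)_t + (hv² + h²/2)_x = μ(h v_x)_x + h f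
    (pde_mom : ∀ t ∈ Icc 0 T, ∀ x ∈ Ioo (0:ℝ) 1,
      Dh 1 0 t x * v t x + h t x * Dv 1 0 t x
        + (Dh 0 1 t x * (v t x) ^ 2 + 2 * h t x * v t x * Dv 0 1 t x
            + h t x * Dh 0 1 t x)
      = μ * (Dh 0 1 t x * Dv 0 1 t x + h t x * Dv 0 2 t x) + h t x * f t)
    (bc : ∀ t ∈ Icc 0 T, v t 0 = 0 ∧ v t 1 = 0)
    (mass : ∀ t ∈ Icc 0 T, (∫ x in (0:ℝ)..1, h t x) = 1)
    -- tank dynamics, reduced-order observer and filter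
    (hξ : ∀ t ∈ Icc 0 T, HasDerivWithinAt ξ (w t) (Icc 0 T) t)
    (hw : ∀ t ∈ Icc 0 T, HasDerivWithinAt w (-(f t)) (Icc 0 T) t)
    (hζ : ∀ t ∈ Icc 0 T,
      HasDerivWithinAt ζ (-γ * ζ t - γ ^ 2 * ξ t - f t) (Icc 0 T) t)
    (hz : ∀ t ∈ Icc 0 T, HasDerivWithinAt z
      (f t - 1 / 2 * ((h t 1) ^ 2 - (h t 0) ^ 2)
        - β * (z t - μ * (h t 1 - h t 0))) (Icc 0 T) t)
    -- the output feedback law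
    (hf : ∀ t ∈ Icc 0 T, f t = -σ * (2 * lam * z t + (1 - 2 * lam) * μ * (h t 1 - h t 0)
        - q * (ζ t + (γ + k) * ξ t))) :
    ∃ Mbar > (0:ℝ), ∃ ε > (0:ℝ), ∀ n : ℕ, 2 ≤ n →
      ∀ δt : ℝ, 0 < δt → δt < T → δt ≤ ε → (1:ℝ) / n ≤ ε →
      ∀ i ≤ n,
        let δx : ℝ := 1 / n
        let hh : ℕ → ℝ := fun j => h 0 (j * δx)
        let vv : ℕ → ℝ := fun j => v 0 (j * δx)
        let fd : ℝ := -σ * (2 * lam * z 0 + (1 - 2 * lam) * μ * (hh n - hh 0)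
          - q * (ζ 0 + (γ + k) * ξ 0))
        let ξp : ℝ := ξ 0 + δt * w 0 - δt ^ 2 / 2 * fd
        let wp : ℝ := w 0 - δt * fd
        let ζp : ℝ := wp - γ * ξp + Real.exp (-γ * δt) * (ζ 0 - w 0 + γ * ξ 0)
        let zp : ℝ := z 0 + δt * (fd - 1 / 2 * ((hh n) ^ 2 - (hh 0) ^ 2)
          - β * (z 0 - μ * (hh n - hh 0)))
        |ξp - ξ δt| + |wp - w δt| + |zp - z δt| + |ζp - ζ δt|
          + (|hPlus δt δx n hh vv i - h δt (i * δx)|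
              + |vPlus δt δx μ fd n hh vv i - v δt (i * δx)|)
        ≤ Mbar * δt * (δt + δx ^ 2) := by

  classical
  have hT0 : (0:ℝ) ∈ Icc 0 T := ⟨le_refl 0, hT.le⟩
  have h01 : (0:ℝ) ∈ Icc (0:ℝ) 1 := by norm_num
  have h11 : (1:ℝ) ∈ Icc (0:ℝ) 1 := by norm_num
  have hcomp : IsCompact (Icc (0:ℝ) T ×ˢ Icc (0:ℝ) 1) := isCompact_Icc.prod isCompact_Icc
  -- a uniform bound on all the partial derivatives
  have hGcont : ContinuousOn (fun p : ℝ × ℝ =>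
      ∑ j ∈ Finset.range 3, ∑ i ∈ Finset.range 5, (|Dh j i p.1 p.2| + |Dv j i p.1 p.2|))
      (Icc 0 T ×ˢ Icc (0:ℝ) 1) := by
    apply continuousOn_finset_sum
    intro j hj
    apply continuousOn_finset_sum
    intro i hi
    exact ((hDh_c j (by simp at hj; omega) i (by simp at hi; omega)).abs).add
      ((hDv_c j (by simp at hj; omega) i (by simp at hi; omega)).abs)
  obtain ⟨Kd0, hKd0⟩ := hcomp.exists_bound_of_continuousOn hGcont
  have hterm : ∀ j ≤ 2, ∀ i ≤ 4, ∀ t ∈ Icc 0 T, ∀ x ∈ Icc (0:ℝ) 1,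
      |Dh j i t x| + |Dv j i t x| ≤ Kd0 := by
    intro j hj i hi t ht x hx
    have hmem : ((t, x) : ℝ × ℝ) ∈ Icc 0 T ×ˢ Icc (0:ℝ) 1 := ⟨ht, hx⟩
    have hsum := hKd0 (t, x) hmem
    rw [Real.norm_eq_abs] at hsum
    have habs := (le_abs_self _).trans hsum
    have h1 := Finset.single_le_sum
      (f := fun j' => ∑ i' ∈ Finset.range 5, (|Dh j' i' t x| + |Dv j' i' t x|))
      (fun _ _ => Finset.sum_nonneg fun _ _ => by positivity) (Finset.mem_range.2 (by omega : j < 3))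
    have h2 := Finset.single_le_sum (f := fun i' => |Dh j i' t x| + |Dv j i' t x|)
      (fun _ _ => by positivity) (Finset.mem_range.2 (by omega : i < 5))
    dsimp only at h1 h2 habs
    linarith
  -- minimum of h
  obtain ⟨p0, hp0mem, hp0min⟩ := hcomp.exists_isMinOn
    (f := fun p : ℝ × ℝ => h p.1 p.2) ⟨((0:ℝ),(0:ℝ)), ⟨hT0, h01⟩⟩
    (by rw [← hDh0]; exact hDh_c 0 (by norm_num) 0 (by norm_num))
  set m : ℝ := h p0.1 p0.2 with hm_def
  have hm : 0 < m := h_pos p0.1 hp0mem.1 p0.2 hp0mem.2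
  have hmle : ∀ t ∈ Icc 0 T, ∀ x ∈ Icc (0:ℝ) 1, m ≤ h t x := by
    intro t ht x hx
    have := hp0min (Set.mk_mem_prod ht hx)
    simpa [hDh0] using this
  have hKd0nn : 0 ≤ Kd0 := le_trans (by positivity)
    (hterm 0 (by norm_num) 0 (by norm_num) 0 hT0 0 h01)
  have hDhb : ∀ j ≤ 2, ∀ i ≤ 4, ∀ t ∈ Icc 0 T, ∀ x ∈ Icc (0:ℝ) 1, |Dh j i t x| ≤ Kd0 := by
    intro j hj i hi t ht x hx
    have := hterm j hj i hi t ht x hx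
    have := abs_nonneg (Dv j i t x)
    linarith
  have hDvb : ∀ j ≤ 2, ∀ i ≤ 4, ∀ t ∈ Icc 0 T, ∀ x ∈ Icc (0:ℝ) 1, |Dv j i t x| ≤ Kd0 := by
    intro j hj i hi t ht x hx
    have := hterm j hj i hi t ht x hx
    have := abs_nonneg (Dh j i t x)
    linarith
  have hhb : ∀ t ∈ Icc 0 T, ∀ x ∈ Icc (0:ℝ) 1, |h t x| ≤ Kd0 := by
    intro t ht x hx
    have := hDhb 0 (by norm_num) 0 (by norm_num) t ht x hx
    rwa [hDh0] at this
  -- derivative functions for the ODE variables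
  set Ez : ℝ → ℝ := fun t =>
    f t - 1 / 2 * ((h t 1) ^ 2 - (h t 0) ^ 2) - β * (z t - μ * (h t 1 - h t 0)) with hEz_def
  set Eζ : ℝ → ℝ := fun t => -γ * ζ t - γ ^ 2 * ξ t - f t with hEζ_def
  have hh1d : ∀ t ∈ Icc 0 T, HasDerivWithinAt (fun s => h s 1) (Dh 1 0 t 1) (Icc 0 T) t := by
    intro t ht
    have := hDh_t 0 (by norm_num) 0 (by norm_num) t ht 1 h11
    rwa [hDh0] at this
  have hh0d : ∀ t ∈ Icc 0 T, HasDerivWithinAt (fun s => h s 0) (Dh 1 0 t 0) (Icc 0 T) t := by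
    intro t ht
    have := hDh_t 0 (by norm_num) 0 (by norm_num) t ht 0 h01
    rwa [hDh0] at this
  set f1 : ℝ → ℝ := fun t => -σ * (2 * lam * Ez t
    + (1 - 2 * lam) * μ * (Dh 1 0 t 1 - Dh 1 0 t 0) - q * (Eζ t + (γ + k) * w t)) with hf1_def
  have hfd : ∀ t ∈ Icc 0 T, HasDerivWithinAt f (f1 t) (Icc 0 T) t := by
    intro t ht
    have hF : HasDerivWithinAt (fun t => -σ * (2 * lam * z t
        + (1 - 2 * lam) * μ * (h t 1 - h t 0) - q * (ζ t + (γ + k) * ξ t)))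
        (f1 t) (Icc 0 T) t := by
      have := ((((hz t ht).const_mul (2 * lam)).add
        (((hh1d t ht).sub (hh0d t ht)).const_mul ((1 - 2 * lam) * μ))).sub
        (((hζ t ht).add ((hξ t ht).const_mul (γ + k))).const_mul q)).const_mul (-σ)
      convert this using 1
      · rfl
      · rfl
      · rfl
    exact hF.congr (fun y hy => hf y hy) (hf t ht)
  set E2 : ℝ → ℝ := fun t => f1 t - 1 / 2 * (2 * h t 1 * Dh 1 0 t 1 - 2 * h t 0 * Dh 1 0 t 0)
    - β * (Ez t - μ * (Dh 1 0 t 1 - Dh 1 0 t 0)) with hE2_def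
  have hEzd : ∀ t ∈ Icc 0 T, HasDerivWithinAt Ez (E2 t) (Icc 0 T) t := by
    intro t ht
    have h1sq : HasDerivWithinAt (fun s => (h s 1) ^ 2) (2 * h t 1 * Dh 1 0 t 1) (Icc 0 T) t := by
      have := (hh1d t ht).pow 2
      convert this using 1
      · rfl
      · rfl
      · rfl
      norm_num
    have h0sq : HasDerivWithinAt (fun s => (h s 0) ^ 2) (2 * h t 0 * Dh 1 0 t 0) (Icc 0 T) t := by
      have := (hh0d t ht).pow 2
      convert this using 1
      · rfl
      · rfl
      · rfl
      norm_num
    exact ((hfd t ht).sub ((h1sq.sub h0sq).const_mul (1 / 2))).sub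
      (((hz t ht).sub (((hh1d t ht).sub (hh0d t ht)).const_mul μ)).const_mul β)
  -- continuity and bounds for f1 and E2
  have hEzc : ContinuousOn Ez (Icc 0 T) := fun t ht => (hEzd t ht).continuousWithinAt
  have hfc : ContinuousOn f (Icc 0 T) := fun t ht => (hfd t ht).continuousWithinAt
  have hζc : ContinuousOn ζ (Icc 0 T) := fun t ht => (hζ t ht).continuousWithinAt
  have hξc : ContinuousOn ξ (Icc 0 T) := fun t ht => (hξ t ht).continuousWithinAt
  have hwc : ContinuousOn w (Icc 0 T) := fun t ht => (hw t ht).continuousWithinAt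
  have hzc : ContinuousOn z (Icc 0 T) := fun t ht => (hz t ht).continuousWithinAt
  have hh1c : ContinuousOn (fun t => h t 1) (Icc 0 T) := fun t ht => (hh1d t ht).continuousWithinAt
  have hh0c : ContinuousOn (fun t => h t 0) (Icc 0 T) := fun t ht => (hh0d t ht).continuousWithinAt
  have hD1c : ContinuousOn (fun t => Dh 1 0 t 1) (Icc 0 T) :=
    fun t ht => (hDh_t 1 (by norm_num) 0 (by norm_num) t ht 1 h11).continuousWithinAt
  have hD0c : ContinuousOn (fun t => Dh 1 0 t 0) (Icc 0 T) :=
    fun t ht => (hDh_t 1 (by norm_num) 0 (by norm_num) t ht 0 h01).continuousWithinAt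
  have hEζc : ContinuousOn Eζ (Icc 0 T) :=
    ((continuousOn_const.mul hζc).sub (continuousOn_const.mul hξc)).sub hfc
  have hf1c : ContinuousOn f1 (Icc 0 T) :=
    continuousOn_const.mul (((continuousOn_const.mul hEzc).add
      (continuousOn_const.mul (hD1c.sub hD0c))).sub
      (continuousOn_const.mul (hEζc.add (continuousOn_const.mul hwc))))
  have hE2c : ContinuousOn E2 (Icc 0 T) :=
    (hf1c.sub (continuousOn_const.mul (((continuousOn_const.mul hh1c).mul hD1c).sub
      ((continuousOn_const.mul hh0c).mul hD0c)))).sub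
      (continuousOn_const.mul (hEzc.sub (continuousOn_const.mul (hD1c.sub hD0c))))
  obtain ⟨Kf, hKf⟩ := isCompact_Icc.exists_bound_of_continuousOn hf1c
  obtain ⟨KE, hKE⟩ := isCompact_Icc.exists_bound_of_continuousOn hE2c
  have hKfnn : 0 ≤ Kf := le_trans (norm_nonneg _) (hKf 0 hT0)
  have hKEnn : 0 ≤ KE := le_trans (norm_nonneg _) (hKE 0 hT0)
  -- Lipschitz bounds for f and Ez
  have hfLip : ∀ u ∈ Icc 0 T, ∀ t₀ ∈ Icc 0 T, |f u - f t₀| ≤ Kf * |u - t₀| :=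
    lip_of_bound (convex_Icc 0 T) hfd (fun u hu => by
      simpa [Real.norm_eq_abs] using hKf u hu)
  have hEzLip : ∀ u ∈ Icc 0 T, ∀ t₀ ∈ Icc 0 T, |Ez u - Ez t₀| ≤ KE * |u - t₀| :=
    lip_of_bound (convex_Icc 0 T) hEzd (fun u hu => by
      simpa [Real.norm_eq_abs] using hKE u hu)
  -- Taylor expansions of the ODE variables
  have hξtay : ∀ t ∈ Icc 0 T, |ξ t - ξ 0 - t * w 0 - t ^ 2 / 2 * (-f 0)| ≤ Kf * |t| ^ 3 := by
    intro t ht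
    have := taylor2 (convex_Icc 0 T) hξ (fun u hu => hw u hu) hT0 hKfnn
      (fun u hu => by
        have := hfLip u hu 0 hT0
        calc |(-f u) - (-f 0)| = |f u - f 0| := by rw [abs_sub_comm]; ring_nf
          _ ≤ Kf * |u - 0| := this) ht
    simpa using this
  have hwtay : ∀ t ∈ Icc 0 T, |w t - w 0 - t * (-f 0)| ≤ Kf * |t| ^ 2 := by
    intro t ht
    have := taylor1 (convex_Icc 0 T) hw hT0 hKfnn
      (fun u hu => by
        have := hfLip u hu 0 hT0
        calc |(-f u) - (-f 0)| = |f u - f 0| := by rw [abs_sub_comm]; ring_nf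
          _ ≤ Kf * |u - 0| := this) ht
    simpa using this
  have hztay : ∀ t ∈ Icc 0 T, |z t - z 0 - t * Ez 0| ≤ KE * |t| ^ 2 := by
    intro t ht
    have := taylor1 (convex_Icc 0 T) (fun u hu => hz u hu) hT0 hKEnn
      (fun u hu => hEzLip u hu 0 hT0) ht
    simp only [hEz_def]
    simpa using this
  -- exact solution formula for the observer combination
  have hzeta : ∀ t ∈ Icc 0 T, ζ t - w t + γ * ξ t = Real.exp (-γ * t) * (ζ 0 - w 0 + γ * ξ 0) := by
    have hphi : ∀ t ∈ Icc 0 T, HasDerivWithinAt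
        (fun s => (ζ s - w s + γ * ξ s) * Real.exp (γ * s)) 0 (Icc 0 T) t := by
      intro t ht
      have hlin : HasDerivWithinAt (fun s : ℝ => γ * s) γ (Icc 0 T) t := by
        simpa using (hasDerivWithinAt_id t (Icc 0 T)).const_mul γ
      have hexp : HasDerivWithinAt (fun s => Real.exp (γ * s))
          (Real.exp (γ * t) * γ) (Icc 0 T) t := hlin.exp
      have hu : HasDerivWithinAt (fun s => ζ s - w s + γ * ξ s)
          (-γ * (ζ t - w t + γ * ξ t)) (Icc 0 T) t := by
        have := ((hζ t ht).sub (hw t ht)).add ((hξ t ht).const_mul γ)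
        convert this using 1
        · rfl
        · rfl
        · rfl
        ring
      have := hu.mul hexp
      convert this using 1
      · rfl
      · rfl
      · rfl
      ring_nf
    intro t ht
    have h0 := lip_of_bound (convex_Icc 0 T) hphi (K := 0) (fun u _ => by norm_num) t ht 0 hT0
    simp only [zero_mul] at h0
    have heq := sub_eq_zero.mp (abs_eq_zero.mp (le_antisymm h0 (abs_nonneg _)))
    have h2 : (ζ t - w t + γ * ξ t) * Real.exp (γ * t) = ζ 0 - w 0 + γ * ξ 0 := by
      rw [heq]; simp
    have hne : Real.exp (γ * t) ≠ 0 := Real.exp_ne_zero _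
    have h3 : ζ t - w t + γ * ξ t = (ζ 0 - w 0 + γ * ξ 0) / Real.exp (γ * t) :=
      (eq_div_iff hne).mpr h2
    rw [h3, neg_mul, Real.exp_neg]
    ring
  -- time Taylor expansions for h and v
  have hhtay : ∀ x ∈ Icc (0:ℝ) 1, ∀ t ∈ Icc 0 T, |h t x - h 0 x - t * Dh 1 0 0 x| ≤ Kd0 * |t| ^ 2 := by
    intro x hx t ht
    have hch : ∀ u ∈ Icc 0 T, HasDerivWithinAt (fun s => h s x) (Dh 1 0 u x) (Icc 0 T) u := by
      intro u hu
      have := hDh_t 0 (by norm_num) 0 (by norm_num) u hu x hx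
      rwa [hDh0] at this
    have hch2 : ∀ u ∈ Icc 0 T, HasDerivWithinAt (fun s => Dh 1 0 s x) (Dh 2 0 u x) (Icc 0 T) u :=
      fun u hu => hDh_t 1 (by norm_num) 0 (by norm_num) u hu x hx
    have hlip := lip_of_bound (convex_Icc 0 T) hch2
      (fun u hu => hDhb 2 le_rfl 0 (by norm_num) u hu x hx)
    have := taylor1 (convex_Icc 0 T) hch hT0 hKd0nn (fun u hu => hlip u hu 0 hT0) ht
    simpa using this
  have hvtay : ∀ x ∈ Icc (0:ℝ) 1, ∀ t ∈ Icc 0 T, |v t x - v 0 x - t * Dv 1 0 0 x| ≤ Kd0 * |t| ^ 2 := by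
    intro x hx t ht
    have hch : ∀ u ∈ Icc 0 T, HasDerivWithinAt (fun s => v s x) (Dv 1 0 u x) (Icc 0 T) u := by
      intro u hu
      have := hDv_t 0 (by norm_num) 0 (by norm_num) u hu x hx
      rwa [hDv0] at this
    have hch2 : ∀ u ∈ Icc 0 T, HasDerivWithinAt (fun s => Dv 1 0 s x) (Dv 2 0 u x) (Icc 0 T) u :=
      fun u hu => hDv_t 1 (by norm_num) 0 (by norm_num) u hu x hx
    have hlip := lip_of_bound (convex_Icc 0 T) hch2
      (fun u hu => hDvb 2 le_rfl 0 (by norm_num) u hu x hx)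
    have := taylor1 (convex_Icc 0 T) hch hT0 hKd0nn (fun u hu => hlip u hu 0 hT0) ht
    simpa using this
  -- spatial derivative chains at time 0
  have hVch : ∀ i < 4, ∀ x ∈ Icc (0:ℝ) 1,
      HasDerivWithinAt (fun y => Dv 0 i 0 y) (Dv 0 (i+1) 0 x) (Icc 0 1) x :=
    fun i hi x hx => hDv_x 0 (by norm_num) i hi 0 hT0 x hx
  have hHch : ∀ i < 4, ∀ x ∈ Icc (0:ℝ) 1,
      HasDerivWithinAt (fun y => Dh 0 i 0 y) (Dh 0 (i+1) 0 x) (Icc 0 1) x :=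
    fun i hi x hx => hDh_x 0 (by norm_num) i hi 0 hT0 x hx
  have hVch0 : ∀ u ∈ Icc (0:ℝ) 1, HasDerivWithinAt (fun y => v 0 y) (Dv 0 1 0 u) (Icc 0 1) u := by
    intro u hu
    have := hVch 0 (by norm_num) u hu
    rwa [hDv0] at this
  have hHch0 : ∀ u ∈ Icc (0:ℝ) 1, HasDerivWithinAt (fun y => h 0 y) (Dh 0 1 0 u) (Icc 0 1) u := by
    intro u hu
    have := hHch 0 (by norm_num) u hu
    rwa [hDh0] at this
  -- Lipschitz bounds for second/third spatial derivatives
  have hV2lip : ∀ u ∈ Icc (0:ℝ) 1, ∀ x₀ ∈ Icc (0:ℝ) 1,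
      |Dv 0 2 0 u - Dv 0 2 0 x₀| ≤ Kd0 * |u - x₀| :=
    lip_of_bound (convex_Icc 0 1) (hVch 2 (by norm_num))
      (fun u hu => hDvb 0 (by norm_num) 3 (by norm_num) 0 hT0 u hu)
  have hV3lip : ∀ u ∈ Icc (0:ℝ) 1, ∀ x₀ ∈ Icc (0:ℝ) 1,
      |Dv 0 3 0 u - Dv 0 3 0 x₀| ≤ Kd0 * |u - x₀| :=
    lip_of_bound (convex_Icc 0 1) (hVch 3 (by norm_num))
      (fun u hu => hDvb 0 (by norm_num) 4 le_rfl 0 hT0 u hu)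
  have hH2lip : ∀ u ∈ Icc (0:ℝ) 1, ∀ x₀ ∈ Icc (0:ℝ) 1,
      |Dh 0 2 0 u - Dh 0 2 0 x₀| ≤ Kd0 * |u - x₀| :=
    lip_of_bound (convex_Icc 0 1) (hHch 2 (by norm_num))
      (fun u hu => hDhb 0 (by norm_num) 3 (by norm_num) 0 hT0 u hu)
  -- spatial Taylor expansions at time 0
  have hvtay2 : ∀ x₀ ∈ Icc (0:ℝ) 1, ∀ y ∈ Icc (0:ℝ) 1,
      |v 0 y - v 0 x₀ - (y - x₀) * Dv 0 1 0 x₀ - (y - x₀) ^ 2 / 2 * Dv 0 2 0 x₀|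
        ≤ Kd0 * |y - x₀| ^ 3 :=
    fun x₀ hx₀ y hy => taylor2 (convex_Icc 0 1) hVch0 (hVch 1 (by norm_num)) hx₀ hKd0nn
      (fun u hu => hV2lip u hu x₀ hx₀) hy
  have hvtay3 : ∀ x₀ ∈ Icc (0:ℝ) 1, ∀ y ∈ Icc (0:ℝ) 1,
      |v 0 y - v 0 x₀ - (y - x₀) * Dv 0 1 0 x₀ - (y - x₀) ^ 2 / 2 * Dv 0 2 0 x₀
        - (y - x₀) ^ 3 / 6 * Dv 0 3 0 x₀| ≤ Kd0 * |y - x₀| ^ 4 :=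
    fun x₀ hx₀ y hy => taylor3 (convex_Icc 0 1) hVch0 (hVch 1 (by norm_num)) (hVch 2 (by norm_num))
      hx₀ hKd0nn (fun u hu => hV3lip u hu x₀ hx₀) hy
  have hhtay2 : ∀ x₀ ∈ Icc (0:ℝ) 1, ∀ y ∈ Icc (0:ℝ) 1,
      |h 0 y - h 0 x₀ - (y - x₀) * Dh 0 1 0 x₀ - (y - x₀) ^ 2 / 2 * Dh 0 2 0 x₀|
        ≤ Kd0 * |y - x₀| ^ 3 :=
    fun x₀ hx₀ y hy => taylor2 (convex_Icc 0 1) hHch0 (hHch 1 (by norm_num)) hx₀ hKd0nn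
      (fun u hu => hH2lip u hu x₀ hx₀) hy
  -- the logarithm of h and its derivatives
  set L1 : ℝ → ℝ := fun y => Dh 0 1 0 y / h 0 y with hL1_def
  set L2 : ℝ → ℝ := fun y => Dh 0 2 0 y / h 0 y - (Dh 0 1 0 y) ^ 2 / (h 0 y) ^ 2 with hL2_def
  set L3 : ℝ → ℝ := fun y => Dh 0 3 0 y / h 0 y - 3 * Dh 0 1 0 y * Dh 0 2 0 y / (h 0 y) ^ 2
    + 2 * (Dh 0 1 0 y) ^ 3 / (h 0 y) ^ 3 with hL3_def
  have hne : ∀ y ∈ Icc (0:ℝ) 1, h 0 y ≠ 0 := fun y hy => (h_pos 0 hT0 y hy).ne'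
  have hLgd : ∀ u ∈ Icc (0:ℝ) 1,
      HasDerivWithinAt (fun y => Real.log (h 0 y)) (L1 u) (Icc 0 1) u :=
    fun u hu => (hHch0 u hu).log (hne u hu)
  have hL1d : ∀ u ∈ Icc (0:ℝ) 1, HasDerivWithinAt L1 (L2 u) (Icc 0 1) u := by
    intro u hu
    have := (hHch 1 (by norm_num) u hu).div (hHch0 u hu) (hne u hu)
    have hhu := hne u hu
    convert this using 1
    · rfl
    · rfl
    · rfl
    simp only [hL2_def]
    field_simp
  have hL2d : ∀ u ∈ Icc (0:ℝ) 1, HasDerivWithinAt L2 (L3 u) (Icc 0 1) u := by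
    intro u hu
    have h1 := (hHch 2 (by norm_num) u hu).div (hHch0 u hu) (hne u hu)
    have h2num : HasDerivWithinAt (fun y => (Dh 0 1 0 y) ^ 2)
        (2 * Dh 0 1 0 u * Dh 0 2 0 u) (Icc 0 1) u := by
      have := (hHch 1 (by norm_num) u hu).pow 2
      convert this using 1
      · rfl
      · rfl
      · rfl
      norm_num
      try ring
    have h2den : HasDerivWithinAt (fun y => (h 0 y) ^ 2)
        (2 * h 0 u * Dh 0 1 0 u) (Icc 0 1) u := by
      have := (hHch0 u hu).pow 2
      convert this using 1
      · rfl
      · rfl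
      · rfl
      norm_num
    have h2 := h2num.div h2den (pow_ne_zero 2 (hne u hu))
    have := h1.sub h2
    have hhu := hne u hu
    convert this using 1
    · rfl
    · rfl
    · rfl
    simp only [hL3_def]
    field_simp
    ring
  -- bound for L3, Lipschitz bound for L2, bound for L1
  have hL1b : ∀ u ∈ Icc (0:ℝ) 1, |L1 u| ≤ Kd0 / m := by
    intro u hu
    rw [hL1_def]
    rw [abs_div, abs_of_pos (h_pos 0 hT0 u hu)]
    exact div_le_div₀ hKd0nn (hDhb 0 (by norm_num) 1 (by norm_num) 0 hT0 u hu) hm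
      (hmle 0 hT0 u hu)
  set KL : ℝ := Kd0 / m + 3 * Kd0 ^ 2 / m ^ 2 + 2 * Kd0 ^ 3 / m ^ 3 with hKL_def
  have hKLnn : 0 ≤ KL := by positivity
  have hL3b : ∀ u ∈ Icc (0:ℝ) 1, |L3 u| ≤ KL := by
    intro u hu
    have hpos := h_pos 0 hT0 u hu
    have hDb1 := hDhb 0 (by norm_num) 1 (by norm_num) 0 hT0 u hu
    have hDb2 := hDhb 0 (by norm_num) 2 (by norm_num) 0 hT0 u hu
    have hDb3 := hDhb 0 (by norm_num) 3 (by norm_num) 0 hT0 u hu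
    have hml := hmle 0 hT0 u hu
    have t1 : |Dh 0 3 0 u / h 0 u| ≤ Kd0 / m := by
      rw [abs_div, abs_of_pos hpos]
      exact div_le_div₀ hKd0nn hDb3 hm hml
    have t2 : |3 * Dh 0 1 0 u * Dh 0 2 0 u / (h 0 u) ^ 2| ≤ 3 * Kd0 ^ 2 / m ^ 2 := by
      rw [abs_div, abs_of_pos (by positivity : (0:ℝ) < (h 0 u) ^ 2)]
      have hsq : m ^ 2 ≤ (h 0 u) ^ 2 := by nlinarith
      apply div_le_div₀ (by positivity) _ (by positivity) hsq
      rw [abs_mul, abs_mul]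
      have := abs_nonneg (Dh 0 1 0 u)
      have := abs_nonneg (Dh 0 2 0 u)
      calc |(3:ℝ)| * |Dh 0 1 0 u| * |Dh 0 2 0 u| = 3 * (|Dh 0 1 0 u| * |Dh 0 2 0 u|) := by
            rw [abs_of_nonneg (by norm_num : (0:ℝ) ≤ 3)]; ring
        _ ≤ 3 * (Kd0 * Kd0) := by nlinarith
        _ = 3 * Kd0 ^ 2 := by ring
    have t3 : |2 * (Dh 0 1 0 u) ^ 3 / (h 0 u) ^ 3| ≤ 2 * Kd0 ^ 3 / m ^ 3 := by
      rw [abs_div, abs_of_pos (by positivity : (0:ℝ) < (h 0 u) ^ 3)]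
      have hcb : m ^ 3 ≤ (h 0 u) ^ 3 := pow_le_pow_left₀ hm.le hml 3
      apply div_le_div₀ (by positivity) _ (by positivity) hcb
      rw [abs_mul, abs_pow]
      have := abs_nonneg (Dh 0 1 0 u)
      calc |(2:ℝ)| * |Dh 0 1 0 u| ^ 3 = 2 * |Dh 0 1 0 u| ^ 3 := by
            rw [abs_of_nonneg (by norm_num : (0:ℝ) ≤ 2)]
        _ ≤ 2 * Kd0 ^ 3 := by
            have := pow_le_pow_left₀ (abs_nonneg (Dh 0 1 0 u)) hDb1 3
            linarith
    rw [hL3_def]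
    rw [hKL_def]
    calc |Dh 0 3 0 u / h 0 u - 3 * Dh 0 1 0 u * Dh 0 2 0 u / (h 0 u) ^ 2
          + 2 * (Dh 0 1 0 u) ^ 3 / (h 0 u) ^ 3|
        ≤ |Dh 0 3 0 u / h 0 u - 3 * Dh 0 1 0 u * Dh 0 2 0 u / (h 0 u) ^ 2|
          + |2 * (Dh 0 1 0 u) ^ 3 / (h 0 u) ^ 3| := abs_add_le _ _
      _ ≤ |Dh 0 3 0 u / h 0 u| + |3 * Dh 0 1 0 u * Dh 0 2 0 u / (h 0 u) ^ 2|
          + |2 * (Dh 0 1 0 u) ^ 3 / (h 0 u) ^ 3| := by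
            linarith [abs_sub (Dh 0 3 0 u / h 0 u)
              (3 * Dh 0 1 0 u * Dh 0 2 0 u / (h 0 u) ^ 2)]
      _ ≤ Kd0 / m + 3 * Kd0 ^ 2 / m ^ 2 + 2 * Kd0 ^ 3 / m ^ 3 := by linarith
  have hL2lip : ∀ u ∈ Icc (0:ℝ) 1, ∀ x₀ ∈ Icc (0:ℝ) 1, |L2 u - L2 x₀| ≤ KL * |u - x₀| :=
    lip_of_bound (convex_Icc 0 1) hL2d hL3b
  have hlogtay2 : ∀ x₀ ∈ Icc (0:ℝ) 1, ∀ y ∈ Icc (0:ℝ) 1,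
      |Real.log (h 0 y) - Real.log (h 0 x₀) - (y - x₀) * L1 x₀ - (y - x₀) ^ 2 / 2 * L2 x₀|
        ≤ KL * |y - x₀| ^ 3 :=
    fun x₀ hx₀ y hy => taylor2 (convex_Icc 0 1) hLgd hL1d hx₀ hKLnn
      (fun u hu => hL2lip u hu x₀ hx₀) hy
  -- generic symmetric-difference estimate
  have hsym : ∀ (g g1 g2 : ℝ → ℝ) (K : ℝ),
      (∀ x₀ ∈ Icc (0:ℝ) 1, ∀ y ∈ Icc (0:ℝ) 1,
        |g y - g x₀ - (y - x₀) * g1 x₀ - (y - x₀) ^ 2 / 2 * g2 x₀| ≤ K * |y - x₀| ^ 3) →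
      ∀ x₀ ∈ Icc (0:ℝ) 1, ∀ d : ℝ, 0 ≤ d → x₀ - d ∈ Icc (0:ℝ) 1 → x₀ + d ∈ Icc (0:ℝ) 1 →
      |g (x₀ - d) - g (x₀ + d) + 2 * d * g1 x₀| ≤ 2 * K * d ^ 3 := by
    intro g g1 g2 K tay x₀ hx₀ d hd hmm hpp
    have h1 := tay x₀ hx₀ _ hpp
    have h2 := tay x₀ hx₀ _ hmm
    have e1 : x₀ + d - x₀ = d := by ring
    have e2 : x₀ - d - x₀ = -d := by ring
    rw [e1, abs_of_nonneg hd] at h1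
    rw [e2, abs_neg, abs_of_nonneg hd] at h2
    have key : g (x₀ - d) - g (x₀ + d) + 2 * d * g1 x₀ =
        (g (x₀ - d) - g x₀ - (-d) * g1 x₀ - (-d) ^ 2 / 2 * g2 x₀)
        - (g (x₀ + d) - g x₀ - d * g1 x₀ - d ^ 2 / 2 * g2 x₀) := by ring
    rw [key]
    calc |_ - _| ≤ _ + _ := abs_sub _ _
      _ ≤ 2 * K * d ^ 3 := by linarith
  -- second-difference estimate for v
  have hsecond : ∀ x₀ ∈ Icc (0:ℝ) 1, ∀ d : ℝ, 0 ≤ d → x₀ - d ∈ Icc (0:ℝ) 1 →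
      x₀ + d ∈ Icc (0:ℝ) 1 →
      |v 0 (x₀ + d) - 2 * v 0 x₀ + v 0 (x₀ - d) - d ^ 2 * Dv 0 2 0 x₀| ≤ 2 * Kd0 * d ^ 4 := by
    intro x₀ hx₀ d hd hmm hpp
    have h1 := hvtay3 x₀ hx₀ _ hpp
    have h2 := hvtay3 x₀ hx₀ _ hmm
    have e1 : x₀ + d - x₀ = d := by ring
    have e2 : x₀ - d - x₀ = -d := by ring
    rw [e1, abs_of_nonneg hd] at h1
    rw [e2, abs_neg, abs_of_nonneg hd] at h2
    have key : v 0 (x₀ + d) - 2 * v 0 x₀ + v 0 (x₀ - d) - d ^ 2 * Dv 0 2 0 x₀ =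
        (v 0 (x₀ + d) - v 0 x₀ - d * Dv 0 1 0 x₀ - d ^ 2 / 2 * Dv 0 2 0 x₀
          - d ^ 3 / 6 * Dv 0 3 0 x₀)
        + (v 0 (x₀ - d) - v 0 x₀ - (-d) * Dv 0 1 0 x₀ - (-d) ^ 2 / 2 * Dv 0 2 0 x₀
          - (-d) ^ 3 / 6 * Dv 0 3 0 x₀) := by ring
    rw [key]
    calc |_ + _| ≤ _ + _ := abs_add_le _ _
      _ ≤ 2 * Kd0 * d ^ 4 := by linarith
  -- PDE consequences at time 0
  have hmass0 : ∀ x ∈ Icc (0:ℝ) 1, Dh 1 0 0 x = -(Dh 0 1 0 x * v 0 x + h 0 x * Dv 0 1 0 x) :=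
    fun x hx => by linarith [pde_mass 0 hT0 x hx]
  have hmom0 : ∀ x ∈ Ioo (0:ℝ) 1, Dv 1 0 0 x =
      μ * Dv 0 2 0 x + μ * Dv 0 1 0 x * L1 x - v 0 x * Dv 0 1 0 x - Dh 0 1 0 x + f 0 := by
    intro x hx
    have hxI : x ∈ Icc (0:ℝ) 1 := Ioo_subset_Icc_self hx
    have h1 := pde_mom 0 hT0 x hx
    have h3 := hmass0 x hxI
    rw [h3] at h1
    have hhx := hne x hxI
    rw [hL1_def]
    field_simp
    linear_combination h1
  -- bound on h_t / h
  have hrb : ∀ x ∈ Icc (0:ℝ) 1, |Dh 1 0 0 x / h 0 x| ≤ Kd0 / m := by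
    intro x hx
    rw [abs_div, abs_of_pos (h_pos 0 hT0 x hx)]
    exact div_le_div₀ hKd0nn (hDhb 1 (by norm_num) 0 (by norm_num) 0 hT0 x hx) hm
      (hmle 0 hT0 x hx)
  have hrx : ∀ x ∈ Icc (0:ℝ) 1, Dh 1 0 0 x / h 0 x = -(v 0 x * L1 x + Dv 0 1 0 x) := by
    intro x hx
    have hhx := hne x hx
    rw [hmass0 x hx, hL1_def]
    field_simp
  have hvb : ∀ x ∈ Icc (0:ℝ) 1, |v 0 x| ≤ Kd0 := by
    intro x hx
    have := hDvb 0 (by norm_num) 0 (by norm_num) 0 hT0 x hx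
    rwa [hDv0] at this
  -- the constants
  obtain ⟨CE, hCEnn, hCE1, hCE2⟩ :
      ∃ CE, 0 ≤ CE ∧ Kd0 + Kd0 * KL ≤ CE ∧ 6 * Kd0 ≤ CE :=
    ⟨Kd0 + Kd0 * KL + 6 * Kd0, by positivity, by nlinarith, by nlinarith⟩
  obtain ⟨CU, hCUnn, hCU1⟩ : ∃ CU, 0 ≤ CU ∧ Kd0 / m + CE = CU :=
    ⟨Kd0 / m + CE, by positivity, rfl⟩
  obtain ⟨Ch, hChnn, hCh1⟩ : ∃ Ch, 0 ≤ Ch ∧ Kd0 * CU ^ 2 + Kd0 * CE + Kd0 = Ch :=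
    ⟨_, by positivity, rfl⟩
  obtain ⟨CP, hCPnn, hCP1⟩ : ∃ CP, 0 ≤ CP ∧ 2 * Kd0 * (2 * KL + 2 * (Kd0 / m)) + 4 * Kd0 * KL = CP :=
    ⟨_, by positivity, rfl⟩
  obtain ⟨Cv, hCvnn, hCv1⟩ : ∃ Cv, 0 ≤ Cv ∧ 2 * μ * Kd0 + μ / 4 * CP + Kd0 ^ 2 + Kd0 + Kd0 = Cv :=
    ⟨_, by positivity, rfl⟩
  obtain ⟨Mb, hMb0, hMb1⟩ : ∃ Mb, 0 < Mb ∧ 3 * Kf + γ * Kf + KE + Ch + Cv + 1 = Mb :=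
    ⟨_, by positivity, rfl⟩
  obtain ⟨ε, hε0, hε1, hεCU⟩ : ∃ ε, 0 < ε ∧ ε ≤ 1 ∧ CU * ε ≤ 1 := by
    refine ⟨min 1 (1 / (1 + CU)), by positivity, min_le_left _ _, ?_⟩
    have h1 : min 1 (1 / (1 + CU)) ≤ 1 / (1 + CU) := min_le_right _ _
    have h2 : CU * min 1 (1 / (1 + CU)) ≤ CU * (1 / (1 + CU)) :=
      mul_le_mul_of_nonneg_left h1 hCUnn
    have h3 : CU * (1 / (1 + CU)) ≤ 1 := by
      rw [mul_one_div]
      rw [div_le_one (by positivity)]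
      linarith
    linarith
  refine ⟨Mb, hMb0, ε, hε0, ?_⟩
  intro n hn δt hδt0 hδtT hδtε hδxε i hi
  intro δx hh vv fd ξp wp ζp zp
  have hδx : δx = 1 / (n:ℝ) := rfl
  have hn0 : (0:ℝ) < (n:ℝ) := by
    have : (0:ℕ) < n := by omega
    exact_mod_cast this
  have hδx0 : 0 < δx := by rw [hδx]; positivity
  have hδxne : δx ≠ 0 := hδx0.ne'
  have hnδx : (n:ℝ) * δx = 1 := by rw [hδx]; field_simp
  have hδx1 : δx ≤ 1 := le_trans (by rw [hδx]; exact hδxε) hε1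
  have hδt1 : δt ≤ 1 := le_trans hδtε hε1
  have hδtI : δt ∈ Icc 0 T := ⟨hδt0.le, hδtT.le⟩
  have hδxsq : δx ^ 2 ≤ 1 := by nlinarith only [hδx0, hδx1]
  have hδxε' : δx ≤ ε := by rw [hδx]; exact hδxε
  have h2δx : 2 * δx ≤ 1 := by
    have h2n : (2:ℝ) ≤ (n:ℝ) := by exact_mod_cast hn
    nlinarith only [h2n, hδx0, hnδx]
  -- values of the initial data
  have hhn1 : hh n = h 0 1 := by show h 0 ((n:ℝ) * δx) = h 0 1; rw [hnδx]
  have hh00 : hh 0 = h 0 0 := by show h 0 (((0:ℕ):ℝ) * δx) = h 0 0; norm_num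
  have hfd0 : fd = f 0 := by
    show -σ * (2 * lam * z 0 + (1 - 2 * lam) * μ * (hh n - hh 0)
      - q * (ζ 0 + (γ + k) * ξ 0)) = f 0
    rw [hhn1, hh00, ← hf 0 hT0]
  -- ODE one-step errors
  have hξerr : |ξp - ξ δt| ≤ Kf * δt ^ 2 := by
    have h1 := hξtay δt hδtI
    rw [abs_of_pos hδt0] at h1
    have h2 : ξp = ξ 0 + δt * w 0 + δt ^ 2 / 2 * (-f 0) := by
      show ξ 0 + δt * w 0 - δt ^ 2 / 2 * fd = _
      rw [hfd0]; ring
    rw [h2, abs_sub_comm]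
    have h3 : |ξ δt - (ξ 0 + δt * w 0 + δt ^ 2 / 2 * (-f 0))|
        = |ξ δt - ξ 0 - δt * w 0 - δt ^ 2 / 2 * (-f 0)| := by ring_nf
    rw [h3]
    calc |ξ δt - ξ 0 - δt * w 0 - δt ^ 2 / 2 * (-f 0)| ≤ Kf * δt ^ 3 := h1
      _ ≤ Kf * δt ^ 2 :=
        mul_le_mul_of_nonneg_left (pow_le_pow_of_le_one hδt0.le hδt1 (by omega)) hKfnn
  have hwerr : |wp - w δt| ≤ Kf * δt ^ 2 := by
    have h1 := hwtay δt hδtI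
    rw [abs_of_pos hδt0] at h1
    have h2 : wp = w 0 + δt * (-f 0) := by
      show w 0 - δt * fd = _
      rw [hfd0]; ring
    rw [h2, abs_sub_comm]
    have h3 : |w δt - (w 0 + δt * (-f 0))| = |w δt - w 0 - δt * (-f 0)| := by ring_nf
    rw [h3]
    exact h1
  have hzerr : |zp - z δt| ≤ KE * δt ^ 2 := by
    have h1 := hztay δt hδtI
    rw [abs_of_pos hδt0] at h1
    have h2 : zp = z 0 + δt * Ez 0 := by
      show z 0 + δt * (fd - 1 / 2 * ((hh n) ^ 2 - (hh 0) ^ 2)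
        - β * (z 0 - μ * (hh n - hh 0))) = _
      rw [hhn1, hh00, hfd0, hEz_def]
    rw [h2, abs_sub_comm]
    have h3 : |z δt - (z 0 + δt * Ez 0)| = |z δt - z 0 - δt * Ez 0| := by ring_nf
    rw [h3]
    exact h1
  have hζerr : |ζp - ζ δt| ≤ Kf * δt ^ 2 + γ * (Kf * δt ^ 2) := by
    have hu := hzeta δt hδtI
    have h2 : ζp - ζ δt = (wp - w δt) - γ * (ξp - ξ δt) := by
      have h4 : ζ δt = (ζ δt - w δt + γ * ξ δt) + w δt - γ * ξ δt := by ring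
      have h5 : ζp = wp - γ * ξp + Real.exp (-γ * δt) * (ζ 0 - w 0 + γ * ξ 0) := rfl
      rw [h5, h4, hu]
      ring
    rw [h2]
    calc |wp - w δt - γ * (ξp - ξ δt)| ≤ |wp - w δt| + |γ * (ξp - ξ δt)| := abs_sub _ _
      _ ≤ Kf * δt ^ 2 + γ * (Kf * δt ^ 2) := by
          rw [abs_mul, abs_of_pos hγ]
          have := mul_le_mul_of_nonneg_left hξerr hγ.le
          linarith [hwerr]
  -- generic assembly for the h-update
  have hHerr : ∀ x ∈ Icc (0:ℝ) 1, ∀ u : ℝ,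
      |u - δt * (Dh 1 0 0 x / h 0 x)| ≤ CE * δt * δx ^ 2 →
      |h 0 x * Real.exp u - h δt x| ≤ Ch * δt * (δt + δx ^ 2) := by
    intro x hx u herr
    have hr := hrb x hx
    have hub : |u| ≤ CU * δt := by
      have t1 : |u| ≤ |u - δt * (Dh 1 0 0 x / h 0 x)| + |δt * (Dh 1 0 0 x / h 0 x)| := by
        calc |u| = |(u - δt * (Dh 1 0 0 x / h 0 x)) + δt * (Dh 1 0 0 x / h 0 x)| := by ring_nf
          _ ≤ _ := abs_add_le _ _
      rw [abs_mul, abs_of_pos hδt0] at t1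
      have t2 : δt * |Dh 1 0 0 x / h 0 x| ≤ δt * (Kd0 / m) :=
        mul_le_mul_of_nonneg_left hr hδt0.le
      have t3 : CE * δt * δx ^ 2 ≤ CE * δt := by
        have := mul_le_mul_of_nonneg_left hδxsq (mul_nonneg hCEnn hδt0.le)
        calc CE * δt * δx ^ 2 ≤ CE * δt * 1 := this
          _ = CE * δt := mul_one _
      have e : (Kd0 / m + CE) * δt = δt * (Kd0 / m) + CE * δt := by ring
      rw [← hCU1, e]
      linarith only [t1, t2, t3, herr]
    have hu1 : |u| ≤ 1 := by
      have t4 : CU * δt ≤ CU * ε := mul_le_mul_of_nonneg_left hδtε hCUnn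
      linarith only [hub, t4, hεCU]
    have hexp := Real.abs_exp_sub_one_sub_id_le hu1
    have husq : u ^ 2 ≤ CU ^ 2 * δt ^ 2 := by
      have h1 := pow_le_pow_left₀ (abs_nonneg u) hub 2
      have h2 : (CU * δt) ^ 2 = CU ^ 2 * δt ^ 2 := by ring
      have h3 := sq_abs u
      linarith only [h1, h2, h3]
    have htime := hhtay x hx δt hδtI
    rw [abs_of_pos hδt0] at htime
    have hhx := hne x hx
    have hcancel : h 0 x * (Dh 1 0 0 x / h 0 x) = Dh 1 0 0 x := by field_simp
    have hid : h 0 x * Real.exp u - h δt x =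
        h 0 x * (Real.exp u - 1 - u) + h 0 x * (u - δt * (Dh 1 0 0 x / h 0 x))
        - (h δt x - h 0 x - δt * Dh 1 0 0 x) := by
      linear_combination δt * hcancel
    have hb := hhb 0 hT0 x hx
    rw [hid]
    have e1 : |h 0 x * (Real.exp u - 1 - u)| ≤ Kd0 * (CU ^ 2 * δt ^ 2) := by
      rw [abs_mul]
      exact mul_le_mul hb (hexp.trans husq) (abs_nonneg _) hKd0nn
    have e2 : |h 0 x * (u - δt * (Dh 1 0 0 x / h 0 x))| ≤ Kd0 * (CE * δt * δx ^ 2) := by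
      rw [abs_mul]
      exact mul_le_mul hb herr (abs_nonneg _) hKd0nn
    calc |h 0 x * (Real.exp u - 1 - u) + h 0 x * (u - δt * (Dh 1 0 0 x / h 0 x))
          - (h δt x - h 0 x - δt * Dh 1 0 0 x)|
        ≤ |h 0 x * (Real.exp u - 1 - u) + h 0 x * (u - δt * (Dh 1 0 0 x / h 0 x))|
          + |h δt x - h 0 x - δt * Dh 1 0 0 x| := abs_sub _ _
      _ ≤ |h 0 x * (Real.exp u - 1 - u)| + |h 0 x * (u - δt * (Dh 1 0 0 x / h 0 x))|
          + |h δt x - h 0 x - δt * Dh 1 0 0 x| := by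
            have haa := abs_add_le (h 0 x * (Real.exp u - 1 - u))
              (h 0 x * (u - δt * (Dh 1 0 0 x / h 0 x)))
            linarith only [haa]
      _ ≤ Kd0 * (CU ^ 2 * δt ^ 2) + Kd0 * (CE * δt * δx ^ 2) + Kd0 * δt ^ 2 := by
          linarith only [htime, e1, e2]
      _ ≤ Ch * δt * (δt + δx ^ 2) := by
          have key : Ch * δt * (δt + δx ^ 2)
              - (Kd0 * (CU ^ 2 * δt ^ 2) + Kd0 * (CE * δt * δx ^ 2) + Kd0 * δt ^ 2)
              = Kd0 * CU ^ 2 * (δt * δx ^ 2) + Kd0 * CE * δt ^ 2 + Kd0 * (δt * δx ^ 2) := by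
            rw [← hCh1]; ring
          have p1 : 0 ≤ Kd0 * CU ^ 2 * (δt * δx ^ 2) :=
            mul_nonneg (mul_nonneg hKd0nn (sq_nonneg CU))
              (mul_nonneg hδt0.le (sq_nonneg δx))
          have p2 : 0 ≤ Kd0 * CE * δt ^ 2 :=
            mul_nonneg (mul_nonneg hKd0nn hCEnn) (sq_nonneg δt)
          have p3 : 0 ≤ Kd0 * (δt * δx ^ 2) :=
            mul_nonneg hKd0nn (mul_nonneg hδt0.le (sq_nonneg δx))
          linarith only [key, p1, p2, p3]
  -- the h-update error
  have hximem : ((i:ℝ)) * δx ∈ Icc (0:ℝ) 1 := by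
    constructor
    · positivity
    · have hin : ((i:ℝ)) ≤ (n:ℝ) := by exact_mod_cast hi
      calc (i:ℝ) * δx ≤ (n:ℝ) * δx := by nlinarith only [hin, hδx0]
        _ = 1 := hnδx
  have hmem1 : δx ∈ Icc (0:ℝ) 1 := ⟨hδx0.le, hδx1⟩
  have hmem2 : 2 * δx ∈ Icc (0:ℝ) 1 := ⟨by positivity, h2δx⟩
  have hmem1' : 1 - δx ∈ Icc (0:ℝ) 1 := ⟨by linarith, by linarith⟩
  have hmem2' : 1 - 2 * δx ∈ Icc (0:ℝ) 1 := ⟨by linarith, by linarith [hδx0]⟩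
  have hv00 : v 0 0 = 0 := (bc 0 hT0).1
  have hv01 : v 0 1 = 0 := (bc 0 hT0).2
  have hCEfin : ∀ c : ℝ, c ≤ CE → c * δt * δx ^ 2 ≤ CE * δt * δx ^ 2 := by
    intro c hc
    have := mul_le_mul_of_nonneg_right hc (mul_nonneg hδt0.le (sq_nonneg δx))
    calc c * δt * δx ^ 2 = c * (δt * δx ^ 2) := by ring
      _ ≤ CE * (δt * δx ^ 2) := this
      _ = CE * δt * δx ^ 2 := by ring
  have hherr : |hPlus δt δx n hh vv i - h δt ((i:ℝ) * δx)| ≤ Ch * δt * (δt + δx ^ 2) := by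
    rcases eq_or_ne i 0 with h0 | h0
    · -- left boundary
      subst h0
      have hPval : hPlus δt δx n hh vv 0
          = h 0 0 * Real.exp (δt / (2 * δx) * (vv 2 - 4 * vv 1)) := by
        rw [hPlus, if_pos rfl, hh00]
      have hx0 : ((0:ℕ):ℝ) * δx = 0 := by norm_num
      rw [hPval, hx0]
      apply hHerr 0 h01
      have hr0 : Dh 1 0 0 0 / h 0 0 = -Dv 0 1 0 0 := by
        rw [hrx 0 h01, hv00]; ring
      have hvv1 : vv 1 = v 0 δx := by
        show v 0 (((1:ℕ):ℝ) * δx) = _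
        norm_num
      have hvv2 : vv 2 = v 0 (2 * δx) := by
        show v 0 (((2:ℕ):ℝ) * δx) = _
        norm_num
      have ht1 := hvtay2 0 h01 δx hmem1
      have ht2 := hvtay2 0 h01 (2 * δx) hmem2
      simp only [sub_zero] at ht1 ht2
      rw [abs_of_pos hδx0] at ht1
      rw [abs_of_pos (by positivity : (0:ℝ) < 2 * δx)] at ht2
      simp only [hv00, sub_zero] at ht1 ht2
      have hcomb : |(vv 2 - 4 * vv 1) + 2 * δx * Dv 0 1 0 0| ≤ 12 * Kd0 * δx ^ 3 := by
        rw [hvv1, hvv2]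
        have key : v 0 (2 * δx) - 4 * v 0 δx + 2 * δx * Dv 0 1 0 0 =
            (v 0 (2 * δx) - 2 * δx * Dv 0 1 0 0 - (2 * δx) ^ 2 / 2 * Dv 0 2 0 0)
            - 4 * (v 0 δx - δx * Dv 0 1 0 0 - δx ^ 2 / 2 * Dv 0 2 0 0) := by
          ring
        rw [key]
        have haa := abs_sub (v 0 (2 * δx) - 2 * δx * Dv 0 1 0 0 - (2 * δx) ^ 2 / 2 * Dv 0 2 0 0)
          (4 * (v 0 δx - δx * Dv 0 1 0 0 - δx ^ 2 / 2 * Dv 0 2 0 0))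
        have hm4 : |(4:ℝ) * (v 0 δx - δx * Dv 0 1 0 0 - δx ^ 2 / 2 * Dv 0 2 0 0)|
            = 4 * |v 0 δx - δx * Dv 0 1 0 0 - δx ^ 2 / 2 * Dv 0 2 0 0| := by
          rw [abs_mul, abs_of_nonneg (by norm_num : (0:ℝ) ≤ 4)]
        rw [hm4] at haa
        calc |(v 0 (2 * δx) - 2 * δx * Dv 0 1 0 0 - (2 * δx) ^ 2 / 2 * Dv 0 2 0 0)
              - 4 * (v 0 δx - δx * Dv 0 1 0 0 - δx ^ 2 / 2 * Dv 0 2 0 0)|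
            ≤ |v 0 (2 * δx) - 2 * δx * Dv 0 1 0 0 - (2 * δx) ^ 2 / 2 * Dv 0 2 0 0|
              + 4 * |v 0 δx - δx * Dv 0 1 0 0 - δx ^ 2 / 2 * Dv 0 2 0 0| := haa
          _ ≤ Kd0 * (2 * δx) ^ 3 + 4 * (Kd0 * δx ^ 3) := by linarith only [ht1, ht2]
          _ = 12 * Kd0 * δx ^ 3 := by ring
      have hid : δt / (2 * δx) * (vv 2 - 4 * vv 1) - δt * (Dh 1 0 0 0 / h 0 0)
          = δt / (2 * δx) * ((vv 2 - 4 * vv 1) + 2 * δx * Dv 0 1 0 0) := by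
        rw [hr0]; field_simp; ring
      rw [hid, abs_mul, abs_of_pos (by positivity : (0:ℝ) < δt / (2 * δx))]
      calc δt / (2 * δx) * |(vv 2 - 4 * vv 1) + 2 * δx * Dv 0 1 0 0|
          ≤ δt / (2 * δx) * (12 * Kd0 * δx ^ 3) :=
            mul_le_mul_of_nonneg_left hcomb (by positivity)
        _ = 6 * Kd0 * δt * δx ^ 2 := by field_simp; ring
        _ ≤ CE * δt * δx ^ 2 := hCEfin _ hCE2
    rcases eq_or_ne i n with hN | hN
    · -- right boundary
      rw [hN]
      have hn0' : ¬ n = 0 := by omega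
      have hPval : hPlus δt δx n hh vv n
          = h 0 1 * Real.exp (δt / (2 * δx) * (4 * vv (n - 1) - vv (n - 2))) := by
        rw [hPlus, if_neg hn0', if_pos rfl, hhn1]
      rw [hPval, hnδx]
      apply hHerr 1 h11
      have hr1 : Dh 1 0 0 1 / h 0 1 = -Dv 0 1 0 1 := by
        rw [hrx 1 h11, hv01]; ring
      have hvvn1 : vv (n - 1) = v 0 (1 - δx) := by
        show v 0 ((((n - 1:ℕ)):ℝ) * δx) = _
        rw [Nat.cast_sub (by omega), Nat.cast_one, sub_mul, one_mul, hnδx]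
      have hvvn2 : vv (n - 2) = v 0 (1 - 2 * δx) := by
        show v 0 ((((n - 2:ℕ)):ℝ) * δx) = _
        rw [Nat.cast_sub (by omega), sub_mul, hnδx]
        norm_num
      have ht1 := hvtay2 1 h11 (1 - δx) hmem1'
      have ht2 := hvtay2 1 h11 (1 - 2 * δx) hmem2'
      have e1 : 1 - δx - 1 = -δx := by ring
      have e2 : 1 - 2 * δx - 1 = -(2 * δx) := by ring
      rw [e1, abs_neg, abs_of_pos hδx0] at ht1
      rw [e2, abs_neg, abs_of_pos (by positivity : (0:ℝ) < 2 * δx)] at ht2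
      simp only [hv01, sub_zero] at ht1 ht2
      have hcomb : |(4 * vv (n - 1) - vv (n - 2)) + 2 * δx * Dv 0 1 0 1|
          ≤ 12 * Kd0 * δx ^ 3 := by
        rw [hvvn1, hvvn2]
        have key : 4 * v 0 (1 - δx) - v 0 (1 - 2 * δx) + 2 * δx * Dv 0 1 0 1 =
            4 * (v 0 (1 - δx) - (-δx) * Dv 0 1 0 1 - (-δx) ^ 2 / 2 * Dv 0 2 0 1)
            - (v 0 (1 - 2 * δx) - (-(2 * δx)) * Dv 0 1 0 1
              - (-(2 * δx)) ^ 2 / 2 * Dv 0 2 0 1) := by ring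
        rw [key]
        have hm4 : |(4:ℝ) * (v 0 (1 - δx) - (-δx) * Dv 0 1 0 1
            - (-δx) ^ 2 / 2 * Dv 0 2 0 1)|
            = 4 * |v 0 (1 - δx) - (-δx) * Dv 0 1 0 1 - (-δx) ^ 2 / 2 * Dv 0 2 0 1| := by
          rw [abs_mul, abs_of_nonneg (by norm_num : (0:ℝ) ≤ 4)]
        have haa := abs_sub (4 * (v 0 (1 - δx) - (-δx) * Dv 0 1 0 1
            - (-δx) ^ 2 / 2 * Dv 0 2 0 1))
            (v 0 (1 - 2 * δx) - (-(2 * δx)) * Dv 0 1 0 1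
              - (-(2 * δx)) ^ 2 / 2 * Dv 0 2 0 1)
        rw [hm4] at haa
        calc |4 * (v 0 (1 - δx) - (-δx) * Dv 0 1 0 1 - (-δx) ^ 2 / 2 * Dv 0 2 0 1)
              - (v 0 (1 - 2 * δx) - (-(2 * δx)) * Dv 0 1 0 1
                - (-(2 * δx)) ^ 2 / 2 * Dv 0 2 0 1)|
            ≤ 4 * |v 0 (1 - δx) - (-δx) * Dv 0 1 0 1 - (-δx) ^ 2 / 2 * Dv 0 2 0 1|
              + |v 0 (1 - 2 * δx) - (-(2 * δx)) * Dv 0 1 0 1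
                - (-(2 * δx)) ^ 2 / 2 * Dv 0 2 0 1| := haa
          _ ≤ 4 * (Kd0 * δx ^ 3) + Kd0 * (2 * δx) ^ 3 := by linarith only [ht1, ht2]
          _ = 12 * Kd0 * δx ^ 3 := by ring
      have hid : δt / (2 * δx) * (4 * vv (n - 1) - vv (n - 2)) - δt * (Dh 1 0 0 1 / h 0 1)
          = δt / (2 * δx) * ((4 * vv (n - 1) - vv (n - 2)) + 2 * δx * Dv 0 1 0 1) := by
        rw [hr1]; field_simp; ring
      rw [hid, abs_mul, abs_of_pos (by positivity : (0:ℝ) < δt / (2 * δx))]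
      calc δt / (2 * δx) * |(4 * vv (n - 1) - vv (n - 2)) + 2 * δx * Dv 0 1 0 1|
          ≤ δt / (2 * δx) * (12 * Kd0 * δx ^ 3) :=
            mul_le_mul_of_nonneg_left hcomb (by positivity)
        _ = 6 * Kd0 * δt * δx ^ 2 := by field_simp; ring
        _ ≤ CE * δt * δx ^ 2 := hCEfin _ hCE2
    · -- interior
      have hi1 : 1 ≤ i := by omega
      have hilt : i + 1 ≤ n := by omega
      have hcast1 : vv (i - 1) = v 0 ((i:ℝ) * δx - δx) := by
        show v 0 ((((i - 1:ℕ)):ℝ) * δx) = _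
        rw [Nat.cast_sub (by omega), Nat.cast_one, sub_mul, one_mul]
      have hcast2 : vv (i + 1) = v 0 ((i:ℝ) * δx + δx) := by
        show v 0 ((((i + 1:ℕ)):ℝ) * δx) = _
        rw [Nat.cast_add, Nat.cast_one, add_mul, one_mul]
      have hcast3 : hh (i - 1) = h 0 ((i:ℝ) * δx - δx) := by
        show h 0 ((((i - 1:ℕ)):ℝ) * δx) = _
        rw [Nat.cast_sub (by omega), Nat.cast_one, sub_mul, one_mul]
      have hcast4 : hh (i + 1) = h 0 ((i:ℝ) * δx + δx) := by
        show h 0 ((((i + 1:ℕ)):ℝ) * δx) = _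
        rw [Nat.cast_add, Nat.cast_one, add_mul, one_mul]
      have hcast5 : vv i = v 0 ((i:ℝ) * δx) := rfl
      have hcast6 : hh i = h 0 ((i:ℝ) * δx) := rfl
      have hxm : (i:ℝ) * δx - δx ∈ Icc (0:ℝ) 1 := by
        constructor
        · have : (1:ℝ) ≤ (i:ℝ) := by exact_mod_cast hi1
          nlinarith only [this, hδx0]
        · have := hximem.2
          linarith [hδx0]
      have hxp : (i:ℝ) * δx + δx ∈ Icc (0:ℝ) 1 := by
        constructor
        · have := hximem.1
          linarith [hδx0]
        · have hip : ((i:ℝ) + 1) ≤ (n:ℝ) := by exact_mod_cast hilt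
          calc (i:ℝ) * δx + δx = ((i:ℝ) + 1) * δx := by ring
            _ ≤ (n:ℝ) * δx := by nlinarith only [hip, hδx0]
            _ = 1 := hnδx
      have hPval : hPlus δt δx n hh vv i
          = h 0 ((i:ℝ) * δx) * Real.exp (δt / (2 * δx) * (v 0 ((i:ℝ) * δx - δx)
              - v 0 ((i:ℝ) * δx + δx))
            + δt / (2 * δx) * v 0 ((i:ℝ) * δx) * (Real.log (h 0 ((i:ℝ) * δx - δx))
              - Real.log (h 0 ((i:ℝ) * δx + δx)))) := by
        rw [hPlus, if_neg h0, if_neg hN, hcast1, hcast2, hcast3, hcast4, hcast5, hcast6,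
          Real.log_div (h_pos 0 hT0 _ hxm).ne' (h_pos 0 hT0 _ hxp).ne']
      rw [hPval]
      apply hHerr ((i:ℝ) * δx) hximem
      have hA := hsym (fun y => v 0 y) (fun y => Dv 0 1 0 y) (fun y => Dv 0 2 0 y) Kd0 hvtay2
        ((i:ℝ) * δx) hximem δx hδx0.le hxm hxp
      have hB := hsym (fun y => Real.log (h 0 y)) L1 L2 KL hlogtay2
        ((i:ℝ) * δx) hximem δx hδx0.le hxm hxp
      have hid : δt / (2 * δx) * (v 0 ((i:ℝ) * δx - δx) - v 0 ((i:ℝ) * δx + δx))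
          + δt / (2 * δx) * v 0 ((i:ℝ) * δx) * (Real.log (h 0 ((i:ℝ) * δx - δx))
            - Real.log (h 0 ((i:ℝ) * δx + δx)))
          - δt * (Dh 1 0 0 ((i:ℝ) * δx) / h 0 ((i:ℝ) * δx))
          = δt / (2 * δx) * ((v 0 ((i:ℝ) * δx - δx) - v 0 ((i:ℝ) * δx + δx)
              + 2 * δx * Dv 0 1 0 ((i:ℝ) * δx))
            + v 0 ((i:ℝ) * δx) * (Real.log (h 0 ((i:ℝ) * δx - δx))
              - Real.log (h 0 ((i:ℝ) * δx + δx)) + 2 * δx * L1 ((i:ℝ) * δx))) := by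
        rw [hrx ((i:ℝ) * δx) hximem]
        field_simp
        ring
      rw [hid, abs_mul, abs_of_pos (by positivity : (0:ℝ) < δt / (2 * δx))]
      have hinner : |(v 0 ((i:ℝ) * δx - δx) - v 0 ((i:ℝ) * δx + δx)
            + 2 * δx * Dv 0 1 0 ((i:ℝ) * δx))
          + v 0 ((i:ℝ) * δx) * (Real.log (h 0 ((i:ℝ) * δx - δx))
            - Real.log (h 0 ((i:ℝ) * δx + δx)) + 2 * δx * L1 ((i:ℝ) * δx))|
          ≤ 2 * Kd0 * δx ^ 3 + Kd0 * (2 * KL * δx ^ 3) := by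
        have haa := abs_add_le (v 0 ((i:ℝ) * δx - δx) - v 0 ((i:ℝ) * δx + δx)
            + 2 * δx * Dv 0 1 0 ((i:ℝ) * δx))
          (v 0 ((i:ℝ) * δx) * (Real.log (h 0 ((i:ℝ) * δx - δx))
            - Real.log (h 0 ((i:ℝ) * δx + δx)) + 2 * δx * L1 ((i:ℝ) * δx)))
        have hmul : |v 0 ((i:ℝ) * δx) * (Real.log (h 0 ((i:ℝ) * δx - δx))
            - Real.log (h 0 ((i:ℝ) * δx + δx)) + 2 * δx * L1 ((i:ℝ) * δx))|
            ≤ Kd0 * (2 * KL * δx ^ 3) := by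
          rw [abs_mul]
          exact mul_le_mul (hvb _ hximem) hB (abs_nonneg _) hKd0nn
        linarith only [haa, hmul, hA]
      calc δt / (2 * δx) * |(v 0 ((i:ℝ) * δx - δx) - v 0 ((i:ℝ) * δx + δx)
              + 2 * δx * Dv 0 1 0 ((i:ℝ) * δx))
            + v 0 ((i:ℝ) * δx) * (Real.log (h 0 ((i:ℝ) * δx - δx))
              - Real.log (h 0 ((i:ℝ) * δx + δx)) + 2 * δx * L1 ((i:ℝ) * δx))|
          ≤ δt / (2 * δx) * (2 * Kd0 * δx ^ 3 + Kd0 * (2 * KL * δx ^ 3)) :=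
            mul_le_mul_of_nonneg_left hinner (by positivity)
        _ = (Kd0 + Kd0 * KL) * δt * δx ^ 2 := by field_simp
        _ ≤ CE * δt * δx ^ 2 := hCEfin _ hCE1
  -- the v-update error
  have hCvprod : 0 ≤ Cv * δt * (δt + δx ^ 2) :=
    mul_nonneg (mul_nonneg hCvnn hδt0.le) (by positivity)
  have hverr : |vPlus δt δx μ fd n hh vv i - v δt ((i:ℝ) * δx)| ≤ Cv * δt * (δt + δx ^ 2) := by
    rcases eq_or_ne i 0 with h0 | h0
    · subst h0
      have hPval : vPlus δt δx μ fd n hh vv 0 = 0 := by rw [vPlus, if_pos (Or.inl rfl)]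
      have hx0 : ((0:ℕ):ℝ) * δx = 0 := by norm_num
      rw [hPval, hx0, (bc δt hδtI).1, sub_zero, abs_zero]
      exact hCvprod
    rcases eq_or_ne i n with hN | hN
    · rw [hN]
      have hPval : vPlus δt δx μ fd n hh vv n = 0 := by rw [vPlus, if_pos (Or.inr rfl)]
      rw [hPval, hnδx, (bc δt hδtI).2, zero_sub, abs_neg, abs_zero]
      exact hCvprod
    · -- interior
      have hi1 : 1 ≤ i := by omega
      have hilt : i + 1 ≤ n := by omega
      set x : ℝ := (i:ℝ) * δx with hxdef
      have hxm : x - δx ∈ Icc (0:ℝ) 1 := by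
        constructor
        · have h1i : (1:ℝ) ≤ (i:ℝ) := by exact_mod_cast hi1
          rw [hxdef]
          nlinarith only [h1i, hδx0]
        · have := hximem.2
          rw [hxdef] at this ⊢
          linarith [hδx0]
      have hxp : x + δx ∈ Icc (0:ℝ) 1 := by
        constructor
        · have := hximem.1
          rw [hxdef] at this ⊢
          linarith [hδx0]
        · have hip : ((i:ℝ) + 1) ≤ (n:ℝ) := by exact_mod_cast hilt
          rw [hxdef]
          calc (i:ℝ) * δx + δx = ((i:ℝ) + 1) * δx := by ring
            _ ≤ (n:ℝ) * δx := by nlinarith only [hip, hδx0]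
            _ = 1 := hnδx
      have hxoo : x ∈ Ioo (0:ℝ) 1 := by
        constructor
        · have h1i : (1:ℝ) ≤ (i:ℝ) := by exact_mod_cast hi1
          rw [hxdef]
          nlinarith only [h1i, hδx0]
        · have := hxp.2
          linarith [hδx0]
      have hcast1 : vv (i - 1) = v 0 (x - δx) := by
        show v 0 ((((i - 1:ℕ)):ℝ) * δx) = _
        rw [Nat.cast_sub (by omega), Nat.cast_one, sub_mul, one_mul, ← hxdef]
      have hcast2 : vv (i + 1) = v 0 (x + δx) := by
        show v 0 ((((i + 1:ℕ)):ℝ) * δx) = _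
        rw [Nat.cast_add, Nat.cast_one, add_mul, one_mul, ← hxdef]
      have hcast3 : hh (i - 1) = h 0 (x - δx) := by
        show h 0 ((((i - 1:ℕ)):ℝ) * δx) = _
        rw [Nat.cast_sub (by omega), Nat.cast_one, sub_mul, one_mul, ← hxdef]
      have hcast4 : hh (i + 1) = h 0 (x + δx) := by
        show h 0 ((((i + 1:ℕ)):ℝ) * δx) = _
        rw [Nat.cast_add, Nat.cast_one, add_mul, one_mul, ← hxdef]
      have hcast5 : vv i = v 0 x := rfl
      have hPval : vPlus δt δx μ fd n hh vv i =
          (1 - 2 * δt * μ / δx ^ 2) * v 0 x + δt * μ / δx ^ 2 * (v 0 (x + δx) + v 0 (x - δx))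
          + δt * μ / (4 * δx ^ 2) * (v 0 (x + δx) - v 0 (x - δx))
            * (Real.log (h 0 (x + δx)) - Real.log (h 0 (x - δx)))
          - δt / (2 * δx) * (v 0 x * (v 0 (x + δx) - v 0 (x - δx)) + h 0 (x + δx) - h 0 (x - δx))
          + f 0 * δt := by
        rw [vPlus, if_neg (by push_neg; exact ⟨h0, hN⟩), hcast1, hcast2, hcast3, hcast4,
          hcast5, hfd0, Real.log_div (h_pos 0 hT0 _ hxp).ne' (h_pos 0 hT0 _ hxm).ne']
      -- the elementary difference estimates
      have hS := hsecond x (Ioo_subset_Icc_self hxoo) δx hδx0.le hxm hxp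
      have hA := hsym (fun y => v 0 y) (fun y => Dv 0 1 0 y) (fun y => Dv 0 2 0 y) Kd0 hvtay2
        x (Ioo_subset_Icc_self hxoo) δx hδx0.le hxm hxp
      have hB := hsym (fun y => Real.log (h 0 y)) L1 L2 KL hlogtay2
        x (Ioo_subset_Icc_self hxoo) δx hδx0.le hxm hxp
      have hGs := hsym (fun y => h 0 y) (fun y => Dh 0 1 0 y) (fun y => Dh 0 2 0 y) Kd0 hhtay2
        x (Ioo_subset_Icc_self hxoo) δx hδx0.le hxm hxp
      have hD : |v 0 (x + δx) - v 0 (x - δx) - 2 * δx * Dv 0 1 0 x| ≤ 2 * Kd0 * δx ^ 3 := by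
        have e : v 0 (x + δx) - v 0 (x - δx) - 2 * δx * Dv 0 1 0 x
            = -(v 0 (x - δx) - v 0 (x + δx) + 2 * δx * Dv 0 1 0 x) := by ring
        rw [e, abs_neg]
        exact hA
      have hΛ : |Real.log (h 0 (x + δx)) - Real.log (h 0 (x - δx)) - 2 * δx * L1 x|
          ≤ 2 * KL * δx ^ 3 := by
        have e : Real.log (h 0 (x + δx)) - Real.log (h 0 (x - δx)) - 2 * δx * L1 x
            = -(Real.log (h 0 (x - δx)) - Real.log (h 0 (x + δx)) + 2 * δx * L1 x) := by ring
        rw [e, abs_neg]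
        exact hB
      have hG : |h 0 (x + δx) - h 0 (x - δx) - 2 * δx * Dh 0 1 0 x| ≤ 2 * Kd0 * δx ^ 3 := by
        have e : h 0 (x + δx) - h 0 (x - δx) - 2 * δx * Dh 0 1 0 x
            = -(h 0 (x - δx) - h 0 (x + δx) + 2 * δx * Dh 0 1 0 x) := by ring
        rw [e, abs_neg]
        exact hGs
      have hδx3 : δx ^ 3 ≤ δx := by nlinarith only [hδx0, hδxsq]
      have hV1b := hDvb 0 (by norm_num) 1 (by norm_num) 0 hT0 x (Ioo_subset_Icc_self hxoo)
      have hL1bx := hL1b x (Ioo_subset_Icc_self hxoo)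
      have hDb : |v 0 (x + δx) - v 0 (x - δx)| ≤ 4 * Kd0 * δx := by
        have t1 : |v 0 (x + δx) - v 0 (x - δx)|
            ≤ |v 0 (x + δx) - v 0 (x - δx) - 2 * δx * Dv 0 1 0 x| + |2 * δx * Dv 0 1 0 x| := by
          have := abs_add_le (v 0 (x + δx) - v 0 (x - δx) - 2 * δx * Dv 0 1 0 x)
            (2 * δx * Dv 0 1 0 x)
          calc |v 0 (x + δx) - v 0 (x - δx)|
              = |(v 0 (x + δx) - v 0 (x - δx) - 2 * δx * Dv 0 1 0 x) + 2 * δx * Dv 0 1 0 x| := by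
                ring_nf
            _ ≤ _ := this
        have t2 : |2 * δx * Dv 0 1 0 x| ≤ 2 * δx * Kd0 := by
          rw [abs_mul, abs_of_pos (by positivity : (0:ℝ) < 2 * δx)]
          exact mul_le_mul_of_nonneg_left hV1b (by positivity)
        have t3 : 2 * Kd0 * δx ^ 3 ≤ 2 * Kd0 * δx :=
          mul_le_mul_of_nonneg_left hδx3 (by positivity)
        calc |v 0 (x + δx) - v 0 (x - δx)| ≤ 2 * Kd0 * δx ^ 3 + 2 * δx * Kd0 := by
              linarith only [t1, t2, hD]
          _ ≤ 4 * Kd0 * δx := by linarith only [t3]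
      have hΛb : |Real.log (h 0 (x + δx)) - Real.log (h 0 (x - δx))|
          ≤ (2 * KL + 2 * (Kd0 / m)) * δx := by
        have t1 : |Real.log (h 0 (x + δx)) - Real.log (h 0 (x - δx))|
            ≤ |Real.log (h 0 (x + δx)) - Real.log (h 0 (x - δx)) - 2 * δx * L1 x|
              + |2 * δx * L1 x| := by
          have := abs_add_le (Real.log (h 0 (x + δx)) - Real.log (h 0 (x - δx)) - 2 * δx * L1 x)
            (2 * δx * L1 x)
          calc |Real.log (h 0 (x + δx)) - Real.log (h 0 (x - δx))|
              = |(Real.log (h 0 (x + δx)) - Real.log (h 0 (x - δx)) - 2 * δx * L1 x)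
                + 2 * δx * L1 x| := by ring_nf
            _ ≤ _ := this
        have t2 : |2 * δx * L1 x| ≤ 2 * δx * (Kd0 / m) := by
          rw [abs_mul, abs_of_pos (by positivity : (0:ℝ) < 2 * δx)]
          exact mul_le_mul_of_nonneg_left hL1bx (by positivity)
        have t3 : 2 * KL * δx ^ 3 ≤ 2 * KL * δx := mul_le_mul_of_nonneg_left hδx3 (by positivity)
        calc |Real.log (h 0 (x + δx)) - Real.log (h 0 (x - δx))|
            ≤ |Real.log (h 0 (x + δx)) - Real.log (h 0 (x - δx)) - 2 * δx * L1 x|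
              + |2 * δx * L1 x| := t1
          _ ≤ 2 * KL * δx ^ 3 + 2 * δx * (Kd0 / m) := add_le_add hΛ t2
          _ ≤ 2 * KL * δx + 2 * δx * (Kd0 / m) := add_le_add t3 (le_refl _)
          _ = (2 * KL + 2 * (Kd0 / m)) * δx := by ring
      -- product estimate
      have hP : |(v 0 (x + δx) - v 0 (x - δx))
            * (Real.log (h 0 (x + δx)) - Real.log (h 0 (x - δx)))
          - 4 * δx ^ 2 * Dv 0 1 0 x * L1 x| ≤ CP * δx ^ 4 := by
        have hidP : (v 0 (x + δx) - v 0 (x - δx))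
              * (Real.log (h 0 (x + δx)) - Real.log (h 0 (x - δx)))
            - 4 * δx ^ 2 * Dv 0 1 0 x * L1 x
            = (v 0 (x + δx) - v 0 (x - δx) - 2 * δx * Dv 0 1 0 x)
              * (Real.log (h 0 (x + δx)) - Real.log (h 0 (x - δx)))
            + (2 * δx * Dv 0 1 0 x)
              * (Real.log (h 0 (x + δx)) - Real.log (h 0 (x - δx)) - 2 * δx * L1 x) := by
          ring
        rw [hidP]
        have p1 : |(v 0 (x + δx) - v 0 (x - δx) - 2 * δx * Dv 0 1 0 x)
              * (Real.log (h 0 (x + δx)) - Real.log (h 0 (x - δx)))|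
            ≤ 2 * Kd0 * δx ^ 3 * ((2 * KL + 2 * (Kd0 / m)) * δx) := by
          rw [abs_mul]
          exact mul_le_mul hD hΛb (abs_nonneg _) (by positivity)
        have p2 : |(2 * δx * Dv 0 1 0 x)
              * (Real.log (h 0 (x + δx)) - Real.log (h 0 (x - δx)) - 2 * δx * L1 x)|
            ≤ 2 * δx * Kd0 * (2 * KL * δx ^ 3) := by
          rw [abs_mul]
          apply mul_le_mul _ hΛ (abs_nonneg _) (by positivity)
          rw [abs_mul, abs_of_pos (by positivity : (0:ℝ) < 2 * δx)]
          exact mul_le_mul_of_nonneg_left hV1b (by positivity)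
        have haa := abs_add_le ((v 0 (x + δx) - v 0 (x - δx) - 2 * δx * Dv 0 1 0 x)
              * (Real.log (h 0 (x + δx)) - Real.log (h 0 (x - δx))))
          ((2 * δx * Dv 0 1 0 x)
              * (Real.log (h 0 (x + δx)) - Real.log (h 0 (x - δx)) - 2 * δx * L1 x))
        have hkey : 2 * Kd0 * δx ^ 3 * ((2 * KL + 2 * (Kd0 / m)) * δx)
            + 2 * δx * Kd0 * (2 * KL * δx ^ 3)
            = (2 * Kd0 * (2 * KL + 2 * (Kd0 / m)) + 4 * Kd0 * KL) * δx ^ 4 := by ring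
        calc _ ≤ _ := haa
          _ ≤ 2 * Kd0 * δx ^ 3 * ((2 * KL + 2 * (Kd0 / m)) * δx)
              + 2 * δx * Kd0 * (2 * KL * δx ^ 3) := add_le_add p1 p2
          _ = (2 * Kd0 * (2 * KL + 2 * (Kd0 / m)) + 4 * Kd0 * KL) * δx ^ 4 := hkey
          _ = CP * δx ^ 4 := by rw [hCP1]
      -- main consistency identity
      have hvbx := hvb x (Ioo_subset_Icc_self hxoo)
      have hQ : |v 0 x * (v 0 (x + δx) - v 0 (x - δx) - 2 * δx * Dv 0 1 0 x)
            + (h 0 (x + δx) - h 0 (x - δx) - 2 * δx * Dh 0 1 0 x)|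
          ≤ Kd0 * (2 * Kd0 * δx ^ 3) + 2 * Kd0 * δx ^ 3 := by
        have haa := abs_add_le (v 0 x * (v 0 (x + δx) - v 0 (x - δx) - 2 * δx * Dv 0 1 0 x))
          (h 0 (x + δx) - h 0 (x - δx) - 2 * δx * Dh 0 1 0 x)
        have p1 : |v 0 x * (v 0 (x + δx) - v 0 (x - δx) - 2 * δx * Dv 0 1 0 x)|
            ≤ Kd0 * (2 * Kd0 * δx ^ 3) := by
          rw [abs_mul]
          exact mul_le_mul hvbx hD (abs_nonneg _) hKd0nn
        calc _ ≤ _ := haa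
          _ ≤ Kd0 * (2 * Kd0 * δx ^ 3) + 2 * Kd0 * δx ^ 3 := by linarith only [p1, hG]
      have hBr := hmom0 x hxoo
      have hmain : vPlus δt δx μ fd n hh vv i - v 0 x - δt * Dv 1 0 0 x
          = δt * μ / δx ^ 2 * (v 0 (x + δx) - 2 * v 0 x + v 0 (x - δx) - δx ^ 2 * Dv 0 2 0 x)
          + δt * μ / (4 * δx ^ 2) * ((v 0 (x + δx) - v 0 (x - δx))
              * (Real.log (h 0 (x + δx)) - Real.log (h 0 (x - δx)))
            - 4 * δx ^ 2 * Dv 0 1 0 x * L1 x)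
          - δt / (2 * δx) * (v 0 x * (v 0 (x + δx) - v 0 (x - δx) - 2 * δx * Dv 0 1 0 x)
            + (h 0 (x + δx) - h 0 (x - δx) - 2 * δx * Dh 0 1 0 x)) := by
        rw [hPval, hBr]
        field_simp
        ring
      have e1 : |δt * μ / δx ^ 2 * (v 0 (x + δx) - 2 * v 0 x + v 0 (x - δx)
            - δx ^ 2 * Dv 0 2 0 x)| ≤ 2 * μ * Kd0 * δt * δx ^ 2 := by
        rw [abs_mul, abs_of_pos (by positivity : (0:ℝ) < δt * μ / δx ^ 2)]
        have := mul_le_mul_of_nonneg_left hS (by positivity : (0:ℝ) ≤ δt * μ / δx ^ 2)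
        calc δt * μ / δx ^ 2 * |v 0 (x + δx) - 2 * v 0 x + v 0 (x - δx) - δx ^ 2 * Dv 0 2 0 x|
            ≤ δt * μ / δx ^ 2 * (2 * Kd0 * δx ^ 4) := this
          _ = 2 * μ * Kd0 * δt * δx ^ 2 := by field_simp
      have e2 : |δt * μ / (4 * δx ^ 2) * ((v 0 (x + δx) - v 0 (x - δx))
              * (Real.log (h 0 (x + δx)) - Real.log (h 0 (x - δx)))
            - 4 * δx ^ 2 * Dv 0 1 0 x * L1 x)| ≤ μ / 4 * CP * δt * δx ^ 2 := by
        rw [abs_mul, abs_of_pos (by positivity : (0:ℝ) < δt * μ / (4 * δx ^ 2))]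
        have := mul_le_mul_of_nonneg_left hP (by positivity : (0:ℝ) ≤ δt * μ / (4 * δx ^ 2))
        calc δt * μ / (4 * δx ^ 2) * |(v 0 (x + δx) - v 0 (x - δx))
              * (Real.log (h 0 (x + δx)) - Real.log (h 0 (x - δx)))
            - 4 * δx ^ 2 * Dv 0 1 0 x * L1 x|
            ≤ δt * μ / (4 * δx ^ 2) * (CP * δx ^ 4) := this
          _ = μ / 4 * CP * δt * δx ^ 2 := by field_simp
      have e3 : |δt / (2 * δx) * (v 0 x * (v 0 (x + δx) - v 0 (x - δx) - 2 * δx * Dv 0 1 0 x)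
            + (h 0 (x + δx) - h 0 (x - δx) - 2 * δx * Dh 0 1 0 x))|
          ≤ (Kd0 ^ 2 + Kd0) * δt * δx ^ 2 := by
        rw [abs_mul, abs_of_pos (by positivity : (0:ℝ) < δt / (2 * δx))]
        have := mul_le_mul_of_nonneg_left hQ (by positivity : (0:ℝ) ≤ δt / (2 * δx))
        calc δt / (2 * δx) * |v 0 x * (v 0 (x + δx) - v 0 (x - δx) - 2 * δx * Dv 0 1 0 x)
            + (h 0 (x + δx) - h 0 (x - δx) - 2 * δx * Dh 0 1 0 x)|
            ≤ δt / (2 * δx) * (Kd0 * (2 * Kd0 * δx ^ 3) + 2 * Kd0 * δx ^ 3) := this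
          _ = (Kd0 ^ 2 + Kd0) * δt * δx ^ 2 := by field_simp
      have hstep : |vPlus δt δx μ fd n hh vv i - v 0 x - δt * Dv 1 0 0 x|
          ≤ (2 * μ * Kd0 + μ / 4 * CP + Kd0 ^ 2 + Kd0) * δt * δx ^ 2 := by
        rw [hmain]
        have haa1 := abs_add_le (δt * μ / δx ^ 2 * (v 0 (x + δx) - 2 * v 0 x + v 0 (x - δx)
            - δx ^ 2 * Dv 0 2 0 x))
          (δt * μ / (4 * δx ^ 2) * ((v 0 (x + δx) - v 0 (x - δx))
              * (Real.log (h 0 (x + δx)) - Real.log (h 0 (x - δx)))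
            - 4 * δx ^ 2 * Dv 0 1 0 x * L1 x))
        have haa2 := abs_sub (δt * μ / δx ^ 2 * (v 0 (x + δx) - 2 * v 0 x + v 0 (x - δx)
            - δx ^ 2 * Dv 0 2 0 x)
          + δt * μ / (4 * δx ^ 2) * ((v 0 (x + δx) - v 0 (x - δx))
              * (Real.log (h 0 (x + δx)) - Real.log (h 0 (x - δx)))
            - 4 * δx ^ 2 * Dv 0 1 0 x * L1 x))
          (δt / (2 * δx) * (v 0 x * (v 0 (x + δx) - v 0 (x - δx) - 2 * δx * Dv 0 1 0 x)
            + (h 0 (x + δx) - h 0 (x - δx) - 2 * δx * Dh 0 1 0 x)))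
        have hsum : 2 * μ * Kd0 * δt * δx ^ 2 + μ / 4 * CP * δt * δx ^ 2
            + (Kd0 ^ 2 + Kd0) * δt * δx ^ 2
            = (2 * μ * Kd0 + μ / 4 * CP + Kd0 ^ 2 + Kd0) * δt * δx ^ 2 := by ring
        linarith only [haa1, haa2, e1, e2, e3, hsum]
      have htime := hvtay x (Ioo_subset_Icc_self hxoo) δt hδtI
      rw [abs_of_pos hδt0] at htime
      have htri : |vPlus δt δx μ fd n hh vv i - v δt x|
          ≤ |vPlus δt δx μ fd n hh vv i - v 0 x - δt * Dv 1 0 0 x|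
            + |v δt x - v 0 x - δt * Dv 1 0 0 x| := by
        have := abs_sub (vPlus δt δx μ fd n hh vv i - v 0 x - δt * Dv 1 0 0 x)
          (v δt x - v 0 x - δt * Dv 1 0 0 x)
        have e : vPlus δt δx μ fd n hh vv i - v 0 x - δt * Dv 1 0 0 x
            - (v δt x - v 0 x - δt * Dv 1 0 0 x) = vPlus δt δx μ fd n hh vv i - v δt x := by
          ring
        rw [e] at this
        exact this
      have hfinal : (2 * μ * Kd0 + μ / 4 * CP + Kd0 ^ 2 + Kd0) * δt * δx ^ 2 + Kd0 * δt ^ 2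
          ≤ Cv * δt * (δt + δx ^ 2) := by
        have key : Cv * δt * (δt + δx ^ 2)
            - ((2 * μ * Kd0 + μ / 4 * CP + Kd0 ^ 2 + Kd0) * δt * δx ^ 2 + Kd0 * δt ^ 2)
            = (2 * μ * Kd0 + μ / 4 * CP + Kd0 ^ 2 + Kd0) * δt ^ 2
              + Kd0 * (δt * δx ^ 2) := by
          rw [← hCv1]; ring
        have p1 : 0 ≤ (2 * μ * Kd0 + μ / 4 * CP + Kd0 ^ 2 + Kd0) * δt ^ 2 := by positivity
        have p2 : 0 ≤ Kd0 * (δt * δx ^ 2) :=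
          mul_nonneg hKd0nn (mul_nonneg hδt0.le (sq_nonneg δx))
        linarith only [key, p1, p2]
      calc |vPlus δt δx μ fd n hh vv i - v δt x|
          ≤ (2 * μ * Kd0 + μ / 4 * CP + Kd0 ^ 2 + Kd0) * δt * δx ^ 2 + Kd0 * δt ^ 2 := by
            linarith only [htri, hstep, htime]
        _ ≤ Cv * δt * (δt + δx ^ 2) := hfinal
  -- combine everything
  have hprod : 0 ≤ δt * (δt + δx ^ 2) :=
    mul_nonneg hδt0.le (by positivity)
  calc |ξp - ξ δt| + |wp - w δt| + |zp - z δt| + |ζp - ζ δt|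
        + (|hPlus δt δx n hh vv i - h δt ((i:ℝ) * δx)|
          + |vPlus δt δx μ fd n hh vv i - v δt ((i:ℝ) * δx)|)
      ≤ Kf * δt ^ 2 + Kf * δt ^ 2 + KE * δt ^ 2 + (Kf * δt ^ 2 + γ * (Kf * δt ^ 2))
        + (Ch * δt * (δt + δx ^ 2) + Cv * δt * (δt + δx ^ 2)) := by
        linarith [hξerr, hwerr, hzerr, hζerr, hherr, hverr]
    _ ≤ Mb * δt * (δt + δx ^ 2) := by
        have key : Mb * δt * (δt + δx ^ 2)
            - (Kf * δt ^ 2 + Kf * δt ^ 2 + KE * δt ^ 2 + (Kf * δt ^ 2 + γ * (Kf * δt ^ 2))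
              + (Ch * δt * (δt + δx ^ 2) + Cv * δt * (δt + δx ^ 2)))
            = (3 * Kf + γ * Kf + KE) * (δt * δx ^ 2) + δt * (δt + δx ^ 2) := by
          rw [← hMb1]; ring
        have p1 : 0 ≤ (3 * Kf + γ * Kf + KE) * (δt * δx ^ 2) := by
          have : 0 ≤ 3 * Kf + γ * Kf + KE := by
            have := mul_nonneg hγ.le hKfnn
            linarith only [hKfnn, hKEnn, this]
          exact mul_nonneg this (mul_nonneg hδt0.le (sq_nonneg δx))
        linarith only [key, p1, hprod]
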